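/- arXiv:math/0005281 — 4 statements merged into one kernel-verified Lean document; each statement's English description precedes it below -/
import Mathlib

section
/- Let G(z) be an n×k matrix with entries in 𝔽(z) of rank k. Then there exists an invertible k×k matrix R(z) with entries in 𝔽(z) such that G̃(z) = G(z)R(z) satisfies: (i) G̃(z) has entries in 𝔽[z]; (ii) G̃(z) is right prime over 𝔽[z]; (iii) G̃(z) is column reduced, with column degrees {e_1,…,e_k}. Moreover, any two n×k polynomial matrices which are right prime over 𝔽[z], column reduced, and whose columns have the same 𝔽((z))-span in 𝔽((z))^n as the columns of G(z), have the same multiset of column degrees {e_1,…,e_k}. -/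
open Matrix

section ConvolutionalDefs

variable {𝔽 : Type} [Field 𝔽]

/-- The left shift `(σw)_t = w_{t+1}` on bi-infinite sequences. -/
def shiftZ {A : Type} (w : ℤ → A) : ℤ → A := fun t => w (t + 1)

/-- A set of bi-infinite sequences is shift-invariant if `σX ⊆ X`. -/
def ShiftInvariant {A : Type} (X : Set (ℤ → A)) : Prop := ∀ w ∈ X, shiftZ w ∈ X

/-- A block `β` occurs in the bi-infinite sequence `w` if `β = w_j w_{j+1} … w_{j+k-1}`
for some `j ∈ ℤ`. -/
def BlockOccursIn {A : Type} (β : List A) (w : ℤ → A) : Prop :=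
  ∃ j : ℤ, ∀ l : Fin β.length, β.get l = w (j + ((l : ℕ) : ℤ))

/-- A block occurs in some element of the set `X`. -/
def OccursInSome {A : Type} (β : List A) (X : Set (ℤ → A)) : Prop :=
  ∃ w ∈ X, BlockOccursIn β w

/-- A set of sequences is irreducible if any ordered pair of blocks occurring in it can be
completed to a single block occurring in it. -/
def IrreducibleShift {A : Type} (X : Set (ℤ → A)) : Prop :=
  ∀ β γ : List A, OccursInSome β X → OccursInSome γ X →
    ∃ μ : List A, OccursInSome (β ++ μ ++ γ) X

/-- A subset of a module is `𝔽`-linear. -/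
def IsLinearSet' (𝔽 : Type) [Field 𝔽] {M : Type} [AddCommGroup M] [Module 𝔽 M]
    (C : Set M) : Prop :=
  (0 : M) ∈ C ∧ (∀ x ∈ C, ∀ y ∈ C, x + y ∈ C) ∧ ∀ (c : 𝔽), ∀ x ∈ C, c • x ∈ C

/-- A behavior `B` is complete if membership can be decided on finite windows:
any `w` which agrees on every finite interval with some element of `B` lies in `B`. -/
def CompleteBehavior {A : Type} (B : Set (ℤ → A)) : Prop :=
  ∀ w : ℤ → A, (∀ a b : ℤ, ∃ x ∈ B, ∀ t : ℤ, a ≤ t → t ≤ b → x t = w t) → w ∈ B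

/-- A behavior `B ⊆ (𝔽^n)^ℤ` is controllable if there is `ℓ ≥ 0` such that any past of a
trajectory of `B` can be concatenated, after a lag of length `ℓ`, with any future of a
trajectory of `B`. -/
def ControllableBehavior {A : Type} (B : Set (ℤ → A)) : Prop :=
  ∃ ℓ : ℕ, ∀ w ∈ B, ∀ w' ∈ B, ∀ j : ℤ, ∃ w'' ∈ B,
    (∀ t : ℤ, t ≤ j → w'' t = w t) ∧ (∀ t : ℤ, j + (ℓ : ℤ) ≤ t → w'' t = w' t)

/-- The operator `G(σ)` associated to a Laurent-polynomial matrix `G(z) = Σ_i G_i z^i`: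
`(G(σ)m)_t = Σ_i G_i m_{t+i}`. -/
noncomputable def lSigma {n k : ℕ} (G : Matrix (Fin n) (Fin k) (LaurentPolynomial 𝔽))
    (m : ℤ → Fin k → 𝔽) : ℤ → Fin n → 𝔽 :=
  fun t a => ∑ b : Fin k, (G a b).coeff.sum fun i c => c * m (t + i) b

/-- The operator `P(σ)` associated to a polynomial matrix, acting on two-sided sequences. -/
noncomputable def pSigma {n k : ℕ} (P : Matrix (Fin n) (Fin k) (Polynomial 𝔽))
    (w : ℤ → Fin k → 𝔽) : ℤ → Fin n → 𝔽 :=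
  fun t a => ∑ b : Fin k, (P a b).sum fun i c => c * w (t + (i : ℤ)) b

/-- The operator `P(σ)` associated to a polynomial matrix, acting on one-sided sequences. -/
noncomputable def pSigmaPlus {n k : ℕ} (P : Matrix (Fin n) (Fin k) (Polynomial 𝔽))
    (w : ℕ → Fin k → 𝔽) : ℕ → Fin n → 𝔽 :=
  fun t a => ∑ b : Fin k, (P a b).sum fun i c => c * w (t + i) b

/-- View a vector of formal Laurent series as a bi-infinite sequence. -/
def lsToSeq {n : ℕ} (v : Fin n → LaurentSeries 𝔽) : ℤ → Fin n → 𝔽 :=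
  fun t a => (v a).coeff t

/-- View a vector of Laurent polynomials as a (finite-support) bi-infinite sequence. -/
def lpToSeq {n : ℕ} (v : Fin n → LaurentPolynomial 𝔽) : ℤ → Fin n → 𝔽 :=
  fun t a => (v a).coeff t

/-- The pairing `(w,v) = Σ_i ⟨w_i, v_i⟩` between a bi-infinite sequence and a finite-support
(Laurent polynomial) vector. -/
noncomputable def seqPairing {n : ℕ} (w : ℤ → Fin n → 𝔽) (v : Fin n → LaurentPolynomial 𝔽) : 𝔽 :=
  ∑ a : Fin n, (v a).coeff.sum fun i c => w i a * c

/-- The `j`-th column degree of a polynomial matrix. -/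
def colDeg {n k : ℕ} (G : Matrix (Fin n) (Fin k) (Polynomial 𝔽)) (j : Fin k) : ℕ :=
  Finset.univ.sup fun i => (G i j).natDegree

/-- The `i`-th row degree of a polynomial matrix. -/
def rowDeg {r n : ℕ} (P : Matrix (Fin r) (Fin n) (Polynomial 𝔽)) (i : Fin r) : ℕ :=
  Finset.univ.sup fun j => (P i j).natDegree

/-- A polynomial `n×k` matrix is column reduced if the constant matrix of leading column
coefficients has rank `k`. -/
def ColumnReduced {n k : ℕ} (G : Matrix (Fin n) (Fin k) (Polynomial 𝔽)) : Prop :=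
  Matrix.rank (Matrix.of fun i j => (G i j).coeff (colDeg G j)) = k

/-- A polynomial `r×n` matrix is row reduced if the constant matrix of leading row
coefficients has rank `r`. -/
def RowReduced {r n : ℕ} (P : Matrix (Fin r) (Fin n) (Polynomial 𝔽)) : Prop :=
  Matrix.rank (Matrix.of fun i j => (P i j).coeff (rowDeg P i)) = r

/-- A matrix over a commutative ring is right prime if it has a left inverse over the ring. -/
def RightPrime {R : Type} [CommRing R] {m l : Type} [Fintype m] [Fintype l] [DecidableEq l]
    (G : Matrix m l R) : Prop :=
  ∃ L : Matrix l m R, L * G = 1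

/-- A matrix over a commutative ring is left prime if it has a right inverse over the ring. -/
def LeftPrime {R : Type} [CommRing R] {m l : Type} [Fintype m] [Fintype l] [DecidableEq m]
    (P : Matrix m l R) : Prop :=
  ∃ Q : Matrix l m R, P * Q = 1

end ConvolutionalDefs

open scoped RatFunc


set_option maxHeartbeats 1000000
set_option synthInstance.maxHeartbeats 400000

namespace MBE
open Polynomial Finset

section General
variable {K : Type} [Field K]




/-- A matrix over a field with full column rank has injective `mulVec`. -/
lemma mulVec_injective_of_rank {n k : ℕ} {K : Type} [Field K] (M : Matrix (Fin n) (Fin k) K)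
    (h : M.rank = k) : Function.Injective M.mulVec := by
  have h1 := LinearMap.finrank_range_add_finrank_ker M.mulVecLin
  rw [Matrix.rank] at h
  rw [h, Module.finrank_pi] at h1
  simp only [Fintype.card_fin] at h1
  have hker : Module.finrank K (LinearMap.ker M.mulVecLin) = 0 := by omega
  have : LinearMap.ker M.mulVecLin = ⊥ := Submodule.finrank_eq_zero.mp hker
  have hinj : Function.Injective M.mulVecLin := LinearMap.ker_eq_bot.mp this
  exact hinj

/-- A matrix over a field with column rank `< k` has a nonzero kernel vector. -/
lemma exists_ker_of_rank_lt {n k : ℕ} {K : Type} [Field K] (M : Matrix (Fin n) (Fin k) K)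
    (h : M.rank ≠ k) : ∃ c : Fin k → K, c ≠ 0 ∧ M.mulVec c = 0 := by
  by_contra hc
  push_neg at hc
  have hinj : Function.Injective M.mulVecLin := by
    rw [← LinearMap.ker_eq_bot]
    rw [Submodule.eq_bot_iff]
    intro c hcmem
    by_contra h0
    exact (hc c h0) hcmem
  apply h
  rw [Matrix.rank, LinearMap.finrank_range_of_inj hinj, Module.finrank_pi, Fintype.card_fin]

/-- Columns of `M * U` lie in the span of columns of `M`. -/
lemma range_transpose_mul_subset_span {n k l : ℕ} {K : Type} [CommRing K]
    (M : Matrix (Fin n) (Fin k) K) (U : Matrix (Fin k) (Fin l) K) :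
    Set.range (M * U)ᵀ ⊆ (Submodule.span K (Set.range Mᵀ) : Submodule K (Fin n → K)) := by
  rintro _ ⟨j, rfl⟩
  have : (M * U)ᵀ j = M.mulVec (fun l' => U l' j) := by
    ext i; simp [Matrix.mulVec, Matrix.mul_apply, dotProduct]
  rw [this, ← Matrix.mulVecLin_apply]
  have := Matrix.range_mulVecLin M
  exact this ▸ LinearMap.mem_range_self _ _

/-- Right multiplication by a unit preserves the column span. -/
lemma span_cols_mul_unit {n k : ℕ} {K : Type} [CommRing K]
    (M : Matrix (Fin n) (Fin k) K) (U : Matrix (Fin k) (Fin k) K) (hU : IsUnit U) :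
    Submodule.span K (Set.range (M * U)ᵀ) = Submodule.span K (Set.range Mᵀ) := by
  obtain ⟨V, hUV, hVU⟩ := isUnit_iff_exists.mp hU
  apply le_antisymm
  · exact Submodule.span_le.mpr (range_transpose_mul_subset_span M U)
  · have hM : M = (M * U) * V := by rw [Matrix.mul_assoc, hUV, Matrix.mul_one]
    nth_rewrite 1 [hM]
    exact Submodule.span_le.mpr (range_transpose_mul_subset_span _ _)




lemma sum_sub_succ_eq {k : ℕ} (g : Fin k → ℕ) (d : ℕ) :
    ∑ j, (d + 1 - g j) = (∑ j, (d - g j)) + (Finset.univ.filter (fun j => g j ≤ d)).card := by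
  rw [Finset.card_filter, ← Finset.sum_add_distrib]
  apply Finset.sum_congr rfl
  intro j _
  split_ifs with h <;> omega

lemma card_le_eq_of_sums {k : ℕ} (e f : Fin k → ℕ)
    (h : ∀ d : ℕ, ∑ j, (d + 1 - e j) = ∑ j, (d + 1 - f j)) :
    ∀ d : ℕ, (Finset.univ.filter (fun j => e j ≤ d)).card
      = (Finset.univ.filter (fun j => f j ≤ d)).card := by
  have aux : ∀ d : ℕ, ∑ j, (d - e j) = ∑ j, (d - f j) := by
    intro d
    induction d with
    | zero => simp
    | succ d _ => exact h d
  intro d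
  have h1 := sum_sub_succ_eq e d
  have h2 := sum_sub_succ_eq f d
  have h3 := aux d
  have h4 := h d
  omega

lemma filter_le_succ_card {k : ℕ} (g : Fin k → ℕ) (m : ℕ) :
    (Finset.univ.filter (fun j => g j ≤ m + 1)).card
      = (Finset.univ.filter (fun j => g j ≤ m)).card
        + (Finset.univ.filter (fun j => g j = m + 1)).card := by
  rw [← Finset.card_union_of_disjoint]
  · congr 1
    rw [← Finset.filter_or]
    apply Finset.filter_congr
    intro j _
    constructor
    · intro hj; omega
    · intro hj; omega
  · rw [Finset.disjoint_filter]
    intro j _ hj hj'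
    omega

lemma multiset_map_eq_of_card_le {k : ℕ} (e f : Fin k → ℕ)
    (h : ∀ d : ℕ, (Finset.univ.filter (fun j => e j ≤ d)).card
      = (Finset.univ.filter (fun j => f j ≤ d)).card) :
    Multiset.map e Finset.univ.val = Multiset.map f Finset.univ.val := by
  have key : ∀ m : ℕ, (Finset.univ.filter (fun j => e j = m)).card
      = (Finset.univ.filter (fun j => f j = m)).card := by
    intro m
    induction m with
    | zero =>
        have h0 := h 0
        have he : (Finset.univ.filter (fun j => e j ≤ 0)) = (Finset.univ.filter (fun j => e j = 0)) := by
          apply Finset.filter_congr; intro j _; omega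
        have hf : (Finset.univ.filter (fun j => f j ≤ 0)) = (Finset.univ.filter (fun j => f j = 0)) := by
          apply Finset.filter_congr; intro j _; omega
        rw [← he, ← hf]; exact h0
    | succ m ih =>
        have h1 := filter_le_succ_card e m
        have h2 := filter_le_succ_card f m
        have h3 := h m
        have h4 := h (m + 1)
        omega
  ext m
  rw [Multiset.count_map, Multiset.count_map]
  have : ∀ (g : Fin k → ℕ), Multiset.card (Multiset.filter (fun a => m = g a) Finset.univ.val)
      = (Finset.univ.filter (fun j => g j = m)).card := by
    intro g
    rw [Finset.card, Finset.filter_val]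
    congr 1
    apply Multiset.filter_congr
    intro x _
    exact eq_comm
  rw [this e, this f, key m]

end General

section PDP
variable {𝔽 : Type} [Field 𝔽] {n k : ℕ}

/-- leading-coefficient matrix -/
def Lead (M : Matrix (Fin n) (Fin k) (Polynomial 𝔽)) : Matrix (Fin n) (Fin k) 𝔽 :=
  Matrix.of fun i j => (M i j).coeff (colDeg M j)

lemma columnReduced_iff (M : Matrix (Fin n) (Fin k) (Polynomial 𝔽)) :
    ColumnReduced M ↔ (Lead M).rank = k := Iff.rfl

lemma natDegree_le_colDeg (M : Matrix (Fin n) (Fin k) (Polynomial 𝔽)) (i : Fin n) (j : Fin k) :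
    (M i j).natDegree ≤ colDeg M j := by
  unfold colDeg
  exact Finset.le_sup (f := fun i => (M i j).natDegree) (Finset.mem_univ i)

/-- Predictable degree property. -/
lemma pdp (M : Matrix (Fin n) (Fin k) (Polynomial 𝔽)) (hCR : ColumnReduced M)
    (d : ℕ) (w : Fin k → Polynomial 𝔽)
    (hw : ∀ i, ((M.mulVec w) i).degree ≤ (d : WithBot ℕ)) :
    ∀ j, w j = 0 ∨ (w j).natDegree + colDeg M j ≤ d := by
  classical
  by_contra hcon
  push_neg at hcon
  obtain ⟨j₁, hj₁ne, hj₁d⟩ := hcon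
  set S : Finset (Fin k) := Finset.univ.filter (fun j => w j ≠ 0) with hS
  have hSne : S.Nonempty := ⟨j₁, by simp [hS, hj₁ne]⟩
  set D : ℕ := S.sup (fun j => (w j).natDegree + colDeg M j) with hD
  obtain ⟨j₀, hj₀S, hj₀⟩ := Finset.exists_mem_eq_sup S hSne (fun j => (w j).natDegree + colDeg M j)
  have hmemj₁ : j₁ ∈ S := by rw [hS]; simp [hj₁ne]
  have hdD : d < D := by
    have h5 : (w j₁).natDegree + colDeg M j₁ ≤ D := by
      rw [hD]; exact Finset.le_sup (f := fun j => (w j).natDegree + colDeg M j) hmemj₁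
    omega
  set c : Fin k → 𝔽 := fun j => (w j).coeff (D - colDeg M j) with hc
  have hsupD : ∀ j ∈ S, (w j).natDegree + colDeg M j ≤ D := by
    intro j hj
    rw [hD]; exact Finset.le_sup (f := fun j => (w j).natDegree + colDeg M j) hj
  have hj₀mem : w j₀ ≠ 0 := by simpa [hS] using hj₀S
  have hcj₀ : c j₀ ≠ 0 := by
    have h1 : (w j₀).natDegree + colDeg M j₀ = D := hj₀.symm
    have h2 : D - colDeg M j₀ = (w j₀).natDegree := by omega
    rw [hc]
    simp only [h2]
    rw [← Polynomial.leadingCoeff]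
    exact Polynomial.leadingCoeff_ne_zero.mpr hj₀mem
  have hker : (Lead M).mulVec c = 0 := by
    funext i
    have hterm : ∀ j, Lead M i j * c j = (M i j * w j).coeff D := by
      intro j
      by_cases hj : w j = 0
      · simp [hj, hc, Lead]
      · have hjS : j ∈ S := by simp [hS, hj]
        have h1 : (w j).natDegree + colDeg M j ≤ D := hsupD j hjS
        have h2 : colDeg M j + (D - colDeg M j) = D := by omega
        have h3 : (w j).natDegree ≤ D - colDeg M j := by omega
        have key := Polynomial.coeff_mul_add_eq_of_natDegree_le (f := M i j) (g := w j)
          (natDegree_le_colDeg M i j) h3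
        calc Lead M i j * c j
            = (M i j).coeff (colDeg M j) * (w j).coeff (D - colDeg M j) := rfl
          _ = (M i j * w j).coeff (colDeg M j + (D - colDeg M j)) := key.symm
          _ = (M i j * w j).coeff D := by rw [h2]
    have hmv : (Lead M).mulVec c i = ((M.mulVec w) i).coeff D := by
      simp only [Matrix.mulVec, dotProduct]
      rw [Polynomial.finset_sum_coeff]
      apply Finset.sum_congr rfl
      intro j _
      exact hterm j
    rw [Pi.zero_apply, hmv]
    apply Polynomial.coeff_eq_zero_of_degree_lt
    exact lt_of_le_of_lt (hw i) (by exact_mod_cast hdD)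
  have hinj := mulVec_injective_of_rank (Lead M) hCR
  have : c = 0 := by
    apply hinj
    rw [hker, Matrix.mulVec_zero]
  exact hcj₀ (by rw [this]; rfl)

end PDP

section Counting
variable {𝔽 : Type} [Field 𝔽] {n k : ℕ}

lemma mulVec_degree_le (M : Matrix (Fin n) (Fin k) (Polynomial 𝔽)) (d : ℕ)
    (u : Fin k → Polynomial 𝔽)
    (hu : ∀ j, (u j).degree < ((d + 1 - colDeg M j : ℕ) : WithBot ℕ)) :
    ∀ i, ((M.mulVec u) i).degree ≤ (d : WithBot ℕ) := by
  intro i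
  rw [Polynomial.degree_le_iff_coeff_zero]
  intro m hm
  have hdm : d < m := by exact_mod_cast hm
  simp only [Matrix.mulVec, dotProduct]
  rw [Polynomial.finset_sum_coeff]
  apply Finset.sum_eq_zero
  intro j _
  rw [Polynomial.coeff_mul]
  apply Finset.sum_eq_zero
  rintro ⟨a, b⟩ hab
  rw [Finset.HasAntidiagonal.mem_antidiagonal] at hab
  simp only at hab ⊢
  by_cases ha : a ≤ colDeg M j
  · have hb : d + 1 - colDeg M j ≤ b := by omega
    have h0 : (u j).coeff b = 0 := by
      apply Polynomial.coeff_eq_zero_of_degree_lt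
      exact lt_of_lt_of_le (hu j) (by exact_mod_cast hb)
    rw [h0, mul_zero]
  · have h0 : (M i j).coeff a = 0 := by
      apply Polynomial.coeff_eq_zero_of_natDegree_lt
      exact lt_of_le_of_lt (natDegree_le_colDeg M i j) (by omega)
    rw [h0, zero_mul]

lemma finrank_pi_degreeLT (e : Fin k → ℕ) :
    Module.finrank 𝔽 (∀ j : Fin k, Polynomial.degreeLT 𝔽 (e j)) = ∑ j, e j := by
  haveI : ∀ j : Fin k, Module.Finite 𝔽 (Polynomial.degreeLT 𝔽 (e j)) :=
    fun j => Module.Finite.equiv (Polynomial.degreeLTEquiv 𝔽 (e j)).symm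
  rw [Module.finrank_pi_fintype 𝔽]
  apply Finset.sum_congr rfl
  intro j _
  rw [(Polynomial.degreeLTEquiv 𝔽 (e j)).finrank_eq, Module.finrank_pi, Fintype.card_fin]

/-- The linear map from bounded-degree coefficient tuples to polynomial vectors. -/
noncomputable def phiMap (M : Matrix (Fin n) (Fin k) (Polynomial 𝔽)) (d : ℕ) :
    (∀ j : Fin k, Polynomial.degreeLT 𝔽 (d + 1 - colDeg M j)) →ₗ[𝔽] (Fin n → Polynomial 𝔽) :=
  (M.mulVecLin.restrictScalars 𝔽).comp
    (LinearMap.pi (fun j => (Submodule.subtype _).comp (LinearMap.proj j)))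

lemma phiMap_apply (M : Matrix (Fin n) (Fin k) (Polynomial 𝔽)) (d : ℕ)
    (u : ∀ j : Fin k, Polynomial.degreeLT 𝔽 (d + 1 - colDeg M j)) :
    phiMap M d u = M.mulVec (fun j => (u j : Polynomial 𝔽)) := rfl

lemma phiMap_inj (M : Matrix (Fin n) (Fin k) (Polynomial 𝔽)) (hrp : RightPrime M) (d : ℕ) :
    Function.Injective (phiMap M d) := by
  intro u v huv
  obtain ⟨L, hL⟩ := hrp
  have h1 : M.mulVec (fun j => (u j : Polynomial 𝔽)) = M.mulVec (fun j => (v j : Polynomial 𝔽)) := huv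
  have h2 := congrArg (L.mulVec) h1
  rw [Matrix.mulVec_mulVec, Matrix.mulVec_mulVec, hL, Matrix.one_mulVec, Matrix.one_mulVec] at h2
  funext j
  exact Subtype.ext (congrFun h2 j)

lemma phiMap_range_le (M₁ M₂ : Matrix (Fin n) (Fin k) (Polynomial 𝔽))
    (hcr₂ : ColumnReduced M₂) (U : Matrix (Fin k) (Fin k) (Polynomial 𝔽))
    (hMU : M₁ = M₂ * U) (d : ℕ) :
    LinearMap.range (phiMap M₁ d) ≤ LinearMap.range (phiMap M₂ d) := by
  rintro _ ⟨u, rfl⟩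
  set u' : Fin k → Polynomial 𝔽 := fun j => (u j : Polynomial 𝔽) with hu'
  have hdeg : ∀ i, ((M₁.mulVec u') i).degree ≤ (d : WithBot ℕ) :=
    mulVec_degree_le M₁ d u' (fun j => Polynomial.mem_degreeLT.mp (u j).2)
  set w : Fin k → Polynomial 𝔽 := U.mulVec u' with hwdef
  have hM1 : M₁.mulVec u' = M₂.mulVec w := by
    rw [hMU, hwdef, Matrix.mulVec_mulVec]
  have hpdp := pdp M₂ hcr₂ d w (by rw [← hM1]; exact hdeg)
  have hmem : ∀ j, w j ∈ Polynomial.degreeLT 𝔽 (d + 1 - colDeg M₂ j) := by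
    intro j
    rw [Polynomial.mem_degreeLT]
    rcases hpdp j with h | h
    · rw [h, Polynomial.degree_zero]
      exact WithBot.bot_lt_coe _
    · have h1 : (w j).natDegree < d + 1 - colDeg M₂ j := by omega
      exact lt_of_le_of_lt (Polynomial.degree_le_natDegree) (by exact_mod_cast h1)
  refine ⟨fun j => ⟨w j, hmem j⟩, ?_⟩
  rw [phiMap_apply, phiMap_apply]
  exact hM1.symm

lemma sum_colDeg_eq (M₁ M₂ : Matrix (Fin n) (Fin k) (Polynomial 𝔽))
    (hrp₁ : RightPrime M₁) (hrp₂ : RightPrime M₂)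
    (hcr₁ : ColumnReduced M₁) (hcr₂ : ColumnReduced M₂)
    (U V : Matrix (Fin k) (Fin k) (Polynomial 𝔽))
    (h₁ : M₁ = M₂ * U) (h₂ : M₂ = M₁ * V) (d : ℕ) :
    ∑ j, (d + 1 - colDeg M₁ j) = ∑ j, (d + 1 - colDeg M₂ j) := by
  have e₁ : LinearMap.range (phiMap M₁ d) = LinearMap.range (phiMap M₂ d) :=
    le_antisymm (phiMap_range_le M₁ M₂ hcr₂ U h₁ d) (phiMap_range_le M₂ M₁ hcr₁ V h₂ d)
  have f₁ : Module.finrank 𝔽 (LinearMap.range (phiMap M₁ d)) = ∑ j, (d + 1 - colDeg M₁ j) := by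
    rw [LinearMap.finrank_range_of_inj (phiMap_inj M₁ hrp₁ d), finrank_pi_degreeLT]
  have f₂ : Module.finrank 𝔽 (LinearMap.range (phiMap M₂ d)) = ∑ j, (d + 1 - colDeg M₂ j) := by
    rw [LinearMap.finrank_range_of_inj (phiMap_inj M₂ hrp₂ d), finrank_pi_degreeLT]
  rw [← f₁, ← f₂, e₁]

lemma colDeg_multiset_eq (M₁ M₂ : Matrix (Fin n) (Fin k) (Polynomial 𝔽))
    (hrp₁ : RightPrime M₁) (hrp₂ : RightPrime M₂)
    (hcr₁ : ColumnReduced M₁) (hcr₂ : ColumnReduced M₂)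
    (U V : Matrix (Fin k) (Fin k) (Polynomial 𝔽))
    (h₁ : M₁ = M₂ * U) (h₂ : M₂ = M₁ * V) :
    Multiset.map (colDeg M₁) Finset.univ.val = Multiset.map (colDeg M₂) Finset.univ.val :=
  multiset_map_eq_of_card_le _ _ (card_le_eq_of_sums _ _
    (fun d => sum_colDeg_eq M₁ M₂ hrp₁ hrp₂ hcr₁ hcr₂ U V h₁ h₂ d))

end Counting

section Unimodular
variable {𝔽 : Type} [Field 𝔽] {n k : ℕ}

lemma matrix_map_injective {R S : Type} [CommRing R] [CommRing S] {f : R →+* S}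
    (hf : Function.Injective f) {m l : ℕ}:
    Function.Injective (fun M : Matrix (Fin m) (Fin l) R => M.map f) := by
  intro M N h
  ext i j
  apply hf
  exact congrFun (congrFun (congrArg Matrix.of.symm h) i) j

lemma algebraMap_poly_laurent_injective :
    Function.Injective (algebraMap (Polynomial 𝔽) (LaurentSeries 𝔽)) := by
  rw [IsScalarTower.algebraMap_eq (Polynomial 𝔽) (RatFunc 𝔽) (LaurentSeries 𝔽)]
  rw [RingHom.coe_comp]
  exact Function.Injective.comp (RingHom.injective _) (IsFractionRing.injective (Polynomial 𝔽) (RatFunc 𝔽))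

lemma exists_unimodular_of_span_eq (M₁ M₂ : Matrix (Fin n) (Fin k) (Polynomial 𝔽))
    (hrp₁ : RightPrime M₁) (hrp₂ : RightPrime M₂)
    (hspan : Submodule.span (LaurentSeries 𝔽)
        (Set.range (M₁.map (algebraMap (Polynomial 𝔽) (LaurentSeries 𝔽)))ᵀ) =
      Submodule.span (LaurentSeries 𝔽)
        (Set.range (M₂.map (algebraMap (Polynomial 𝔽) (LaurentSeries 𝔽)))ᵀ)) :
    ∃ U V : Matrix (Fin k) (Fin k) (Polynomial 𝔽),
      M₁ = M₂ * U ∧ M₂ = M₁ * V ∧ U * V = 1 ∧ V * U = 1 := by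
  classical
  obtain ⟨L₁, hL₁⟩ := hrp₁
  obtain ⟨L₂, hL₂⟩ := hrp₂
  set φ : Polynomial 𝔽 →+* LaurentSeries 𝔽 := algebraMap (Polynomial 𝔽) (LaurentSeries 𝔽) with hφ
  have hφinj : Function.Injective φ := algebraMap_poly_laurent_injective
  -- main step: if columns of `A.map φ` lie in the span of columns of `B.map φ` and
  -- `LB * B = 1` then `B * (LB * A) = A`.
  have main : ∀ (A B : Matrix (Fin n) (Fin k) (Polynomial 𝔽))
      (LB : Matrix (Fin k) (Fin n) (Polynomial 𝔽)), LB * B = 1 →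
      (Submodule.span (LaurentSeries 𝔽) (Set.range (A.map φ)ᵀ) ≤
        Submodule.span (LaurentSeries 𝔽) (Set.range (B.map φ)ᵀ)) →
      B * (LB * A) = A := by
    intro A B LB hLB hle
    -- build `W` over Laurent series with `(B.map φ) * W = A.map φ`
    have hcol : ∀ j : Fin k, ∃ c : Fin k → LaurentSeries 𝔽,
        ∑ l, c l • (B.map φ)ᵀ l = (A.map φ)ᵀ j := by
      intro j
      have hj : (A.map φ)ᵀ j ∈ Submodule.span (LaurentSeries 𝔽) (Set.range (B.map φ)ᵀ) :=
        hle (Submodule.subset_span (Set.mem_range_self j))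
      exact (Submodule.mem_span_range_iff_exists_fun _).mp hj
    choose c hc using hcol
    set W : Matrix (Fin k) (Fin k) (LaurentSeries 𝔽) := Matrix.of fun l j => c j l with hW
    have hBW : (B.map φ) * W = A.map φ := by
      apply Matrix.ext
      intro i j
      have := congrFun (hc j) i
      simp only [Matrix.transpose_apply, Finset.sum_apply, Pi.smul_apply, smul_eq_mul] at this
      rw [Matrix.mul_apply]
      rw [← this]
      apply Finset.sum_congr rfl
      intro l _
      exact mul_comm _ _
    have hL2B : (L₂ : Matrix (Fin k) (Fin n) (Polynomial 𝔽)) = L₂ := rfl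
    have hLBφ : (LB.map φ) * (B.map φ) = 1 := by
      rw [← Matrix.map_mul, hLB, Matrix.map_one φ (map_zero φ) (map_one φ)]
    apply matrix_map_injective hφinj
    show (B * (LB * A)).map φ = A.map φ
    rw [Matrix.map_mul, Matrix.map_mul, ← hBW]
    rw [← Matrix.mul_assoc, ← Matrix.mul_assoc, Matrix.mul_assoc (B.map φ) (LB.map φ) (B.map φ)]
    rw [Matrix.mul_assoc (B.map φ), hLBφ, Matrix.one_mul]
  have h₁ : M₂ * (L₂ * M₁) = M₁ := main M₁ M₂ L₂ hL₂ (le_of_eq hspan)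
  have h₂ : M₁ * (L₁ * M₂) = M₂ := main M₂ M₁ L₁ hL₁ (le_of_eq hspan.symm)
  refine ⟨L₂ * M₁, L₁ * M₂, h₁.symm, h₂.symm, ?_, ?_⟩
  · have : M₂ * ((L₂ * M₁) * (L₁ * M₂)) = M₂ := by
      rw [← Matrix.mul_assoc, h₁, h₂]
    calc (L₂ * M₁) * (L₁ * M₂) = (L₂ * M₂) * ((L₂ * M₁) * (L₁ * M₂)) := by
          rw [hL₂, Matrix.one_mul]
      _ = L₂ * (M₂ * ((L₂ * M₁) * (L₁ * M₂))) := by rw [Matrix.mul_assoc]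
      _ = L₂ * M₂ := by rw [this]
      _ = 1 := hL₂
  · have : M₁ * ((L₁ * M₂) * (L₂ * M₁)) = M₁ := by
      rw [← Matrix.mul_assoc, h₂, h₁]
    calc (L₁ * M₂) * (L₂ * M₁) = (L₁ * M₁) * ((L₁ * M₂) * (L₂ * M₁)) := by
          rw [hL₁, Matrix.one_mul]
      _ = L₁ * (M₁ * ((L₁ * M₂) * (L₂ * M₁))) := by rw [Matrix.mul_assoc]
      _ = L₁ * M₁ := by rw [this]
      _ = 1 := hL₁

end Unimodular

section Existence
variable {𝔽 : Type} [Field 𝔽] {n k : ℕ}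

lemma ratfunc_mul_denom (q : RatFunc 𝔽) :
    q * algebraMap (Polynomial 𝔽) (RatFunc 𝔽) q.denom = algebraMap _ _ q.num := by
  have hd : algebraMap (Polynomial 𝔽) (RatFunc 𝔽) q.denom ≠ 0 := by
    simpa using RatFunc.denom_ne_zero q
  rw [eq_comm, ← div_eq_iff hd]
  exact RatFunc.num_div_denom q

/-- Clear denominators of a rational matrix. -/
lemma exists_poly_of_ratfunc (G : Matrix (Fin n) (Fin k) (RatFunc 𝔽)) :
    ∃ (D : Matrix (Fin k) (Fin k) (RatFunc 𝔽)) (P : Matrix (Fin n) (Fin k) (Polynomial 𝔽)),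
      IsUnit D ∧ G * D = P.map (algebraMap (Polynomial 𝔽) (RatFunc 𝔽)) := by
  classical
  set d : Fin k → Polynomial 𝔽 := fun j => ∏ i, (G i j).denom with hd
  refine ⟨Matrix.diagonal (fun j => algebraMap (Polynomial 𝔽) (RatFunc 𝔽) (d j)),
    Matrix.of (fun i j => (G i j).num * ∏ i' ∈ Finset.univ.erase i, (G i' j).denom), ?_, ?_⟩
  · rw [Matrix.isUnit_iff_isUnit_det, Matrix.det_diagonal]
    apply IsUnit.of_mul_eq_one (∏ j, (algebraMap (Polynomial 𝔽) (RatFunc 𝔽) (d j))⁻¹)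
    rw [← Finset.prod_mul_distrib]
    apply Finset.prod_eq_one
    intro j _
    apply mul_inv_cancel₀
    simp only [hd, map_prod]
    apply Finset.prod_ne_zero_iff.mpr
    intro i _
    simpa using RatFunc.denom_ne_zero (G i j)
  · apply Matrix.ext
    intro i j
    rw [Matrix.mul_diagonal]
    have hsplit : d j = (G i j).denom * ∏ i' ∈ Finset.univ.erase i, (G i' j).denom := by
      rw [hd]
      exact (Finset.mul_prod_erase Finset.univ (fun i' => (G i' j).denom) (Finset.mem_univ i)).symm
    rw [hsplit, _root_.map_mul, ← mul_assoc, ratfunc_mul_denom]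
    simp only [Matrix.map_apply, Matrix.of_apply, _root_.map_mul, map_prod]

/-- coordinatewise inclusion of polynomial vectors into rational-function vectors -/
noncomputable def psiMap (𝔽 : Type) [Field 𝔽] (n : ℕ) :
    (Fin n → Polynomial 𝔽) →ₗ[Polynomial 𝔽] (Fin n → RatFunc 𝔽) :=
  LinearMap.pi (fun i => (Algebra.linearMap (Polynomial 𝔽) (RatFunc 𝔽)).comp (LinearMap.proj i))

lemma psiMap_apply (v : Fin n → Polynomial 𝔽) (i : Fin n) :
    psiMap 𝔽 n v i = algebraMap _ _ (v i) := rfl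

lemma psiMap_injective : Function.Injective (psiMap 𝔽 n) := by
  intro x y hxy
  funext i
  exact IsFractionRing.injective (Polynomial 𝔽) (RatFunc 𝔽) (congrFun hxy i)

/-- Extraction of a right prime factor. -/
lemma exists_right_prime (P : Matrix (Fin n) (Fin k) (Polynomial 𝔽))
    (hrk : (P.map (algebraMap (Polynomial 𝔽) (RatFunc 𝔽))).rank = k) :
    ∃ (G' : Matrix (Fin n) (Fin k) (Polynomial 𝔽)) (T : Matrix (Fin k) (Fin k) (Polynomial 𝔽)),
      RightPrime G' ∧ P = G' * T ∧
      IsUnit (T.map (algebraMap (Polynomial 𝔽) (RatFunc 𝔽))) := by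
  classical
  set PK := P.map (algebraMap (Polynomial 𝔽) (RatFunc 𝔽)) with hPK
  set ψ := psiMap 𝔽 n with hψ
  set Vspan : Submodule (RatFunc 𝔽) (Fin n → RatFunc 𝔽) :=
    Submodule.span (RatFunc 𝔽) (Set.range PKᵀ) with hV
  set N : Submodule (Polynomial 𝔽) (Fin n → Polynomial 𝔽) :=
    (Vspan.restrictScalars (Polynomial 𝔽)).comap ψ with hN
  have hfinrankV : Module.finrank (RatFunc 𝔽) Vspan = k := by
    rw [hV, show Set.range PKᵀ = Set.range PK.col from rfl, ← Matrix.range_mulVecLin, ← Matrix.rank]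
    exact hrk
  have hcolP : ∀ j : Fin k, (fun i => P i j) ∈ N := by
    intro j
    rw [hN]
    simp only [Submodule.mem_comap, Submodule.restrictScalars_mem]
    have heq : ψ (fun i => P i j) = PKᵀ j := by
      funext i
      rw [hψ, psiMap_apply]
      rfl
    rw [heq]
    exact Submodule.subset_span (Set.mem_range_self j)
  obtain ⟨m, bN⟩ := Submodule.basisOfPid (Pi.basisFun (Polynomial 𝔽) (Fin n)) N
  set F : N →ₗ[Polynomial 𝔽] (Fin n → RatFunc 𝔽) := ψ.comp N.subtype with hF
  set v : Fin m → (Fin n → RatFunc 𝔽) := fun l => F (bN l) with hv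
  have hvmem : ∀ l, v l ∈ Vspan := fun l => (bN l).2
  have hFinj : Function.Injective F := by
    rw [hF]
    intro x y hxy
    exact Subtype.ext (psiMap_injective (hψ ▸ hxy))
  have hvliA : LinearIndependent (Polynomial 𝔽) v :=
    bN.linearIndependent.map' F (LinearMap.ker_eq_bot.mpr hFinj)
  have hvliK : LinearIndependent (RatFunc 𝔽) v :=
    LinearIndependent.localization (RatFunc 𝔽) (nonZeroDivisors (Polynomial 𝔽)) hvliA
  have hpsix : ∀ x : N, ψ (x : Fin n → Polynomial 𝔽)
      = ∑ l, algebraMap (Polynomial 𝔽) (RatFunc 𝔽) (bN.repr x l) • v l := by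
    intro x
    conv_lhs => rw [show ψ (x : Fin n → Polynomial 𝔽) = F x from rfl, ← bN.sum_repr x]
    rw [map_sum]
    apply Finset.sum_congr rfl
    intro l _
    rw [_root_.map_smul]
    exact (algebraMap_smul (RatFunc 𝔽) _ _).symm
  have hmk : m = k := by
    apply le_antisymm
    · have h1 : Submodule.span (RatFunc 𝔽) (Set.range v) ≤ Vspan := by
        rw [Submodule.span_le]
        rintro _ ⟨l, rfl⟩
        exact hvmem l
      have h2 := Submodule.finrank_mono h1
      rw [finrank_span_eq_card hvliK, Fintype.card_fin, hfinrankV] at h2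
      exact h2
    · have h1 : Vspan ≤ Submodule.span (RatFunc 𝔽) (Set.range v) := by
        rw [hV, Submodule.span_le]
        rintro _ ⟨j, rfl⟩
        have heq : PKᵀ j = ψ ((⟨fun i => P i j, hcolP j⟩ : N) : Fin n → Polynomial 𝔽) := by
          funext i
          rw [hψ, psiMap_apply]
          rfl
        rw [heq, hpsix]
        apply Submodule.sum_mem
        intro l _
        exact Submodule.smul_mem _ _ (Submodule.subset_span (Set.mem_range_self l))
      have h2 := Submodule.finrank_mono h1
      rw [finrank_span_eq_card hvliK, Fintype.card_fin, hfinrankV] at h2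
      exact h2
  set b : Module.Basis (Fin k) (Polynomial 𝔽) N := bN.reindex (finCongr hmk) with hb
  set G' : Matrix (Fin n) (Fin k) (Polynomial 𝔽) :=
    Matrix.of (fun i j => (b j : Fin n → Polynomial 𝔽) i) with hG'
  set T : Matrix (Fin k) (Fin k) (Polynomial 𝔽) :=
    Matrix.of (fun l j => b.repr ⟨fun i => P i j, hcolP j⟩ l) with hT
  have hcoe_sum : ∀ x : N, ∑ l, b.repr x l • (b l : Fin n → Polynomial 𝔽)
      = (x : Fin n → Polynomial 𝔽) := by
    intro x
    have h2 : (N.subtype) (∑ l, b.repr x l • b l) = ∑ l, b.repr x l • (b l : Fin n → Polynomial 𝔽) := by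
      rw [map_sum]
      apply Finset.sum_congr rfl
      intro l _
      rw [_root_.map_smul]
      rfl
    rw [← h2, b.sum_repr x]
    rfl
  have hPT : P = G' * T := by
    apply Matrix.ext
    intro i j
    rw [Matrix.mul_apply]
    have h3 := congrFun (hcoe_sum ⟨fun i => P i j, hcolP j⟩) i
    simp only [Finset.sum_apply, Pi.smul_apply, smul_eq_mul] at h3
    rw [← h3]
    apply Finset.sum_congr rfl
    intro l _
    exact mul_comm _ _
  -- right primeness via a splitting of the quotient
  haveI hqfin : Module.Finite (Polynomial 𝔽) ((Fin n → Polynomial 𝔽) ⧸ N) :=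
    Module.Finite.of_surjective N.mkQ (Submodule.mkQ_surjective N)
  haveI hqnzsd : NoZeroSMulDivisors (Polynomial 𝔽) ((Fin n → Polynomial 𝔽) ⧸ N) := by
    constructor
    intro c x hcx
    by_cases hc : c = 0
    · exact Or.inl hc
    right
    obtain ⟨y, rfl⟩ := Submodule.mkQ_surjective N x
    have h1 : N.mkQ (c • y) = 0 := by
      rw [_root_.map_smul, hcx]
    have h2 : c • y ∈ N := by
      have h2' : c • y ∈ LinearMap.ker N.mkQ := LinearMap.mem_ker.mpr h1
      rwa [Submodule.ker_mkQ] at h2'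
    have h3 : ψ (c • y) ∈ (Vspan.restrictScalars (Polynomial 𝔽)) := h2
    have hcK : algebraMap (Polynomial 𝔽) (RatFunc 𝔽) c ≠ 0 := by
      intro hcc
      exact hc (IsFractionRing.injective (Polynomial 𝔽) (RatFunc 𝔽) (by rw [hcc, map_zero]))
    have h4 : ψ y ∈ Vspan := by
      have h5 : ψ (c • y) = algebraMap (Polynomial 𝔽) (RatFunc 𝔽) c • ψ y := by
        rw [_root_.map_smul]
        exact (algebraMap_smul (RatFunc 𝔽) _ _).symm
      have h6 : ψ y = (algebraMap (Polynomial 𝔽) (RatFunc 𝔽) c)⁻¹ • ψ (c • y) := by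
        rw [h5, smul_smul, inv_mul_cancel₀ hcK, one_smul]
      rw [h6]
      exact Submodule.smul_mem _ _ h3
    have h7 : y ∈ N := h4
    rw [show N.mkQ y = Submodule.Quotient.mk y from rfl, Submodule.Quotient.mk_eq_zero]
    exact h7
  haveI hqfree : Module.Free (Polynomial 𝔽) ((Fin n → Polynomial 𝔽) ⧸ N) :=
    Module.free_iff_isTorsionFree.mpr inferInstance
  obtain ⟨hlift, hhlift⟩ := Module.projective_lifting_property N.mkQ LinearMap.id
    (Submodule.mkQ_surjective N)
  set p : (Fin n → Polynomial 𝔽) →ₗ[Polynomial 𝔽] (Fin n → Polynomial 𝔽) :=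
    LinearMap.id - hlift.comp N.mkQ with hp
  have hpN : ∀ x, p x ∈ N := by
    intro x
    have goal' : N.mkQ (p x) = 0 → p x ∈ N := by
      intro hz
      have h2' : p x ∈ LinearMap.ker N.mkQ := LinearMap.mem_ker.mpr hz
      rwa [Submodule.ker_mkQ] at h2'
    apply goal'
    rw [hp]
    simp only [LinearMap.sub_apply, LinearMap.id_apply, LinearMap.comp_apply, _root_.map_sub]
    have := LinearMap.congr_fun hhlift (N.mkQ x)
    rw [LinearMap.comp_apply] at this
    rw [this]
    simp
  set q : (Fin n → Polynomial 𝔽) →ₗ[Polynomial 𝔽] N := LinearMap.codRestrict N p hpN with hq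
  have hqmem : ∀ (x : Fin n → Polynomial 𝔽) (hx : x ∈ N), q x = ⟨x, hx⟩ := by
    intro x hx
    apply Subtype.ext
    show p x = x
    rw [hp]
    simp only [LinearMap.sub_apply, LinearMap.id_apply, LinearMap.comp_apply]
    have h0 : N.mkQ x = 0 := by
      rw [show N.mkQ x = Submodule.Quotient.mk x from rfl, Submodule.Quotient.mk_eq_zero]
      exact hx
    rw [h0, map_zero, sub_zero]
  set F2 : (Fin n → Polynomial 𝔽) →ₗ[Polynomial 𝔽] (Fin k →₀ Polynomial 𝔽) :=
    (b.repr.toLinearMap).comp q with hF2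
  set LM : Matrix (Fin k) (Fin n) (Polynomial 𝔽) :=
    Matrix.of (fun j i => F2 (Pi.single i 1) j) with hLM
  have hLG : LM * G' = 1 := by
    apply Matrix.ext
    intro j j'
    rw [Matrix.mul_apply]
    have hsingle : ∑ i, (b j' : Fin n → Polynomial 𝔽) i • Pi.single (i := i) (M := fun _ : Fin n => Polynomial 𝔽) 1
        = (b j' : Fin n → Polynomial 𝔽) := by
      funext i'
      rw [Finset.sum_apply]
      rw [Finset.sum_eq_single i']
      · simp
      · intro i _ hne
        simp [Pi.single_apply, (Ne.symm hne)]
      · intro habs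
        exact absurd (Finset.mem_univ i') habs
    have hkey : ∑ i, LM j i * G' i j' = F2 (b j' : Fin n → Polynomial 𝔽) j := by
      rw [← hsingle, map_sum]
      rw [Finsupp.finset_sum_apply]
      apply Finset.sum_congr rfl
      intro i _
      rw [_root_.map_smul]
      simp only [Finsupp.smul_apply, smul_eq_mul]
      exact mul_comm _ _
    rw [hkey]
    have hF2b : F2 (b j' : Fin n → Polynomial 𝔽) = Finsupp.single j' 1 := by
      rw [hF2, LinearMap.comp_apply, hqmem _ (b j').2]
      show b.repr (b j') = Finsupp.single j' 1
      have : (⟨(b j' : Fin n → Polynomial 𝔽), (b j').2⟩ : N) = b j' := rfl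
      rw [b.repr_self]
    rw [hF2b, Finsupp.single_apply, Matrix.one_apply]
    by_cases hjj : j = j'
    · simp [hjj]
    · simp [hjj, Ne.symm hjj]
  -- T is invertible over the rational functions
  have hPKmul : PK = (G'.map (algebraMap (Polynomial 𝔽) (RatFunc 𝔽)))
      * (T.map (algebraMap (Polynomial 𝔽) (RatFunc 𝔽))) := by
    rw [hPK, hPT, Matrix.map_mul]
  have hTdet : (T.map (algebraMap (Polynomial 𝔽) (RatFunc 𝔽))).det ≠ 0 := by
    intro h0
    obtain ⟨w, hw0, hwker⟩ := Matrix.exists_mulVec_eq_zero_iff.mpr h0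
    have h1 : PK.mulVec w = 0 := by
      rw [hPKmul, ← Matrix.mulVec_mulVec, hwker, Matrix.mulVec_zero]
    have h2 := mulVec_injective_of_rank PK hrk
    apply hw0
    apply h2
    rw [h1, Matrix.mulVec_zero]
  exact ⟨G', T, ⟨LM, hLG⟩, hPT, (Matrix.isUnit_iff_isUnit_det _).mpr (isUnit_iff_ne_zero.mpr hTdet)⟩

/-- One can column reduce a right prime polynomial matrix by a unimodular transformation. -/
lemma exists_column_reduced_aux : ∀ (s : ℕ) (M : Matrix (Fin n) (Fin k) (Polynomial 𝔽)),
    RightPrime M → (∑ j, colDeg M j) ≤ s →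
    ∃ U : Matrix (Fin k) (Fin k) (Polynomial 𝔽), IsUnit U ∧ ColumnReduced (M * U) := by
  intro s
  induction s using Nat.strong_induction_on with
  | _ s ih =>
    intro M hrp hbound
    by_cases hcr : ColumnReduced M
    · exact ⟨1, isUnit_one, by rwa [Matrix.mul_one]⟩
    obtain ⟨c, hc0, hcker⟩ := exists_ker_of_rank_lt (Lead M) hcr
    classical
    set e := colDeg M with he
    set S : Finset (Fin k) := Finset.univ.filter (fun j => c j ≠ 0) with hS
    have hSne : S.Nonempty := by
      obtain ⟨j, hj⟩ := Function.ne_iff.mp hc0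
      refine ⟨j, ?_⟩
      simp only [hS, Finset.mem_filter, Finset.mem_univ, true_and]
      simpa using hj
    obtain ⟨j₀, hj₀S, hj₀⟩ := Finset.exists_mem_eq_sup S hSne e
    have hcj₀ : c j₀ ≠ 0 := by simpa [hS] using hj₀S
    set c' : Fin k → 𝔽 := fun l => c l / c j₀ with hc'
    have hc'j₀ : c' j₀ = 1 := div_self hcj₀
    have hc'ker : (Lead M).mulVec c' = 0 := by
      funext i
      have h1 := congrFun hcker i
      simp only [Matrix.mulVec, dotProduct, Pi.zero_apply] at h1 ⊢
      rw [show (0:𝔽) = (c j₀)⁻¹ * 0 by ring, ← h1, Finset.mul_sum]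
      apply Finset.sum_congr rfl
      intro l _
      rw [hc']
      field_simp
    have hsupS : ∀ l ∈ S, e l ≤ e j₀ := by
      intro l hl
      rw [← hj₀]
      exact Finset.le_sup hl
    set U₀ : Matrix (Fin k) (Fin k) (Polynomial 𝔽) :=
      Matrix.of (fun l j => if j = j₀ then Polynomial.C (c' l) * Polynomial.X ^ (e j₀ - e l)
        else (1 : Matrix (Fin k) (Fin k) (Polynomial 𝔽)) l j) with hU₀
    have hU₀unit : IsUnit U₀ := by
      rw [Matrix.isUnit_iff_isUnit_det]
      set u : Fin k → Polynomial 𝔽 :=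
        fun l => if l = j₀ then 0 else Polynomial.C (c' l) * Polynomial.X ^ (e j₀ - e l) with hu
      have hdecomp : U₀ = 1 + Matrix.replicateCol Unit u * Matrix.replicateRow Unit (Pi.single j₀ 1 : Fin k → Polynomial 𝔽) := by
        apply Matrix.ext
        intro l j
        rw [hU₀]
        simp only [Matrix.add_apply, Matrix.of_apply, Matrix.mul_apply, Matrix.replicateCol_apply,
          Matrix.replicateRow_apply, Finset.univ_unique, Finset.sum_singleton]
        by_cases hj : j = j₀
        · subst hj
          by_cases hl : l = j
          · subst hl
            simp [hu, Matrix.one_apply, hc'j₀, Pi.single_apply]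
          · simp [hu, hl, Matrix.one_apply, hl, Pi.single_apply]
        · simp [hj, Pi.single_apply, Ne.symm, fun h => hj h]
      rw [hdecomp, Matrix.det_one_add_replicateCol_mul_replicateRow]
      have : (Pi.single (i := j₀) (M := fun _ : Fin k => Polynomial 𝔽) 1) ⬝ᵥ u = 0 := by
        simp only [dotProduct, Pi.single_apply]
        apply Finset.sum_eq_zero
        intro l _
        by_cases hl : l = j₀
        · subst hl; simp [hu]
        · simp [hl]
      rw [this]
      simp
    set M' := M * U₀ with hM'
    have hcol_ne : ∀ j, j ≠ j₀ → (∀ i, M' i j = M i j) := by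
      intro j hj i
      rw [hM', Matrix.mul_apply]
      have : ∀ l, M i l * U₀ l j = M i l * (1 : Matrix (Fin k) (Fin k) (Polynomial 𝔽)) l j := by
        intro l
        rw [hU₀]
        simp [hj]
      rw [Finset.sum_congr rfl (fun l _ => this l)]
      have := congrFun (congrFun (Matrix.mul_one M) i) j
      rw [← this, Matrix.mul_apply]
    have hcolDeg_ne : ∀ j, j ≠ j₀ → colDeg M' j = e j := by
      intro j hj
      unfold colDeg
      apply Finset.sup_congr rfl
      intro i _
      rw [hcol_ne j hj i]
    -- coefficients of the new column `j₀`
    have hcoeff : ∀ (i : Fin n) (t : ℕ), e j₀ ≤ t →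
        (M' i j₀).coeff t = ∑ l, (M i l).coeff (t - (e j₀ - e l)) * c' l := by
      intro i t ht
      rw [hM', Matrix.mul_apply]
      rw [Polynomial.finset_sum_coeff]
      apply Finset.sum_congr rfl
      intro l _
      have hU₀entry : U₀ l j₀ = Polynomial.C (c' l) * Polynomial.X ^ (e j₀ - e l) := by
        rw [hU₀]
        simp
      rw [hU₀entry, ← mul_assoc, Polynomial.coeff_mul_X_pow', mul_comm (M i l) (Polynomial.C (c' l))]
      by_cases hl : c l = 0
      · have : c' l = 0 := by rw [hc']; simp [hl]
        simp [this]
      · have hlS : l ∈ S := by simp [hS, hl]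
        rw [if_pos (le_trans (Nat.sub_le _ _) ht)]
        rw [Polynomial.coeff_C_mul]
        ring
    have hzero : ∀ (i : Fin n) (t : ℕ), e j₀ < t → (M' i j₀).coeff t = 0 := by
      intro i t ht
      rw [hcoeff i t (le_of_lt ht)]
      apply Finset.sum_eq_zero
      intro l _
      by_cases hl : c l = 0
      · have : c' l = 0 := by rw [hc']; simp [hl]
        simp [this]
      · have hlS : l ∈ S := by simp [hS, hl]
        have hle : e l ≤ e j₀ := hsupS l hlS
        have : e l < t - (e j₀ - e l) := by omega
        rw [Polynomial.coeff_eq_zero_of_natDegree_lt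
          (lt_of_le_of_lt (natDegree_le_colDeg M i l) this), zero_mul]
    have hcoeff_top : ∀ i : Fin n, (M' i j₀).coeff (e j₀) = 0 := by
      intro i
      rw [hcoeff i (e j₀) le_rfl]
      have h1 := congrFun hc'ker i
      simp only [Matrix.mulVec, dotProduct, Pi.zero_apply] at h1
      rw [← h1]
      apply Finset.sum_congr rfl
      intro l _
      by_cases hl : c l = 0
      · have : c' l = 0 := by rw [hc']; simp [hl]
        simp [this]
      · have hlS : l ∈ S := by simp [hS, hl]
        have hle : e l ≤ e j₀ := hsupS l hlS
        have : e j₀ - (e j₀ - e l) = e l := by omega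
        rw [this]
        rfl
    have hrpM' : RightPrime M' := by
      obtain ⟨L, hL⟩ := hrp
      obtain ⟨V₀, hUV₀, hVU₀⟩ := isUnit_iff_exists.mp hU₀unit
      refine ⟨V₀ * L, ?_⟩
      rw [hM', ← Matrix.mul_assoc, Matrix.mul_assoc V₀ L M, hL, Matrix.mul_one, hVU₀]
    by_cases hej₀ : e j₀ = 0
    · -- then the new column `j₀` is zero, contradicting right primeness
      exfalso
      have hcolzero : ∀ i, M' i j₀ = 0 := by
        intro i
        apply Polynomial.ext
        intro t
        rw [Polynomial.coeff_zero]
        rcases Nat.eq_zero_or_pos t with ht | ht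
        · subst ht
          have := hcoeff_top i
          rwa [hej₀] at this
        · exact hzero i t (by omega)
      obtain ⟨L', hL'⟩ := hrpM'
      have h1 := congrFun (congrFun hL' j₀) j₀
      rw [Matrix.mul_apply, Matrix.one_apply_eq] at h1
      have h2 : ∑ i, L' j₀ i * M' i j₀ = 0 := by
        apply Finset.sum_eq_zero
        intro i _
        rw [hcolzero i, mul_zero]
      rw [h2] at h1
      exact one_ne_zero h1.symm
    · -- strictly decreasing degree sum; recurse
      have hdegj₀ : colDeg M' j₀ < e j₀ := by
        have hub : ∀ i, (M' i j₀).natDegree ≤ e j₀ - 1 := by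
          intro i
          rw [Polynomial.natDegree_le_iff_coeff_eq_zero]
          intro t ht
          rcases Nat.lt_or_ge t (e j₀) with h | h
          · omega
          · rcases Nat.eq_or_lt_of_le h with h' | h'
            · rw [← h']; exact hcoeff_top i
            · exact hzero i t h'
        have : colDeg M' j₀ ≤ e j₀ - 1 := by
          unfold colDeg
          exact Finset.sup_le (fun i _ => hub i)
        omega
      have hsum : ∑ j, colDeg M' j < ∑ j, colDeg M j := by
        have h1 : ∀ j ∈ Finset.univ, j ≠ j₀ → colDeg M' j = e j := fun j _ hj => hcolDeg_ne j hj
        rw [← Finset.add_sum_erase _ _ (Finset.mem_univ j₀),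
          ← Finset.add_sum_erase _ (colDeg M) (Finset.mem_univ j₀)]
        have h2 : ∑ j ∈ Finset.univ.erase j₀, colDeg M' j = ∑ j ∈ Finset.univ.erase j₀, colDeg M j := by
          apply Finset.sum_congr rfl
          intro j hj
          exact hcolDeg_ne j (Finset.ne_of_mem_erase hj)
        rw [h2]
        have h3 : colDeg M j₀ = e j₀ := rfl
        omega
      obtain ⟨U', hU', hcr'⟩ := ih (∑ j, colDeg M' j) (lt_of_lt_of_le hsum hbound) M' hrpM' le_rfl
      refine ⟨U₀ * U', hU₀unit.mul hU', ?_⟩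
      rwa [← Matrix.mul_assoc, ← hM']

lemma exists_column_reduced (M : Matrix (Fin n) (Fin k) (Polynomial 𝔽)) (hrp : RightPrime M) :
    ∃ U : Matrix (Fin k) (Fin k) (Polynomial 𝔽), IsUnit U ∧ ColumnReduced (M * U) :=
  exists_column_reduced_aux (∑ j, colDeg M j) M hrp le_rfl

end Existence

end MBE

/-- Every rational encoder of rank `k` is equivalent, via an invertible rational
matrix `R`, to a polynomial, right prime, column reduced encoder; and every polynomial, right
prime, column reduced matrix whose columns have the same `𝔽((z))`-span has the same multiset
of column degrees. -/
theorem minimal_basic_encoder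
    (𝔽 : Type) [Field 𝔽] [Fintype 𝔽] (n k : ℕ)
    (G : Matrix (Fin n) (Fin k) (RatFunc 𝔽)) (hG : G.rank = k) :
    ∃ (R : Matrix (Fin k) (Fin k) (RatFunc 𝔽))
      (G' : Matrix (Fin n) (Fin k) (Polynomial 𝔽)),
      IsUnit R ∧
      G * R = G'.map (algebraMap (Polynomial 𝔽) (RatFunc 𝔽)) ∧
      RightPrime G' ∧
      ColumnReduced G' ∧
      ∀ G₁ : Matrix (Fin n) (Fin k) (Polynomial 𝔽),
        RightPrime G₁ → ColumnReduced G₁ →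
        Submodule.span (LaurentSeries 𝔽)
            (Set.range (G₁.map (algebraMap (Polynomial 𝔽) (LaurentSeries 𝔽)))ᵀ) =
          Submodule.span (LaurentSeries 𝔽)
            (Set.range (G.map (algebraMap (RatFunc 𝔽) (LaurentSeries 𝔽)))ᵀ) →
        Multiset.map (colDeg G₁) Finset.univ.val = Multiset.map (colDeg G') Finset.univ.val := by
  
  classical
  obtain ⟨D, P, hD, hGD⟩ := MBE.exists_poly_of_ratfunc G
  have hDdet : IsUnit D.det := (Matrix.isUnit_iff_isUnit_det D).mp hD
  have hPrk : (P.map (algebraMap (Polynomial 𝔽) (RatFunc 𝔽))).rank = k := by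
    rw [← hGD, Matrix.rank_mul_eq_left_of_isUnit_det D G hDdet, hG]
  obtain ⟨G₀, T, hrp₀, hPT, hTunit⟩ := MBE.exists_right_prime P hPrk
  obtain ⟨U, hUunit, hcr⟩ := MBE.exists_column_reduced G₀ hrp₀
  set G' := G₀ * U with hG'def
  have hrp' : RightPrime G' := by
    obtain ⟨L₀, hL₀⟩ := hrp₀
    obtain ⟨V, hUV, hVU⟩ := isUnit_iff_exists.mp hUunit
    refine ⟨V * L₀, ?_⟩
    rw [hG'def, ← Matrix.mul_assoc, Matrix.mul_assoc V L₀ G₀, hL₀, Matrix.mul_one, hVU]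
  obtain ⟨Tinv, hT1, hT2⟩ := isUnit_iff_exists.mp hTunit
  have hUK : IsUnit (U.map (algebraMap (Polynomial 𝔽) (RatFunc 𝔽))) := by
    have := hUunit.map (RingHom.mapMatrix (algebraMap (Polynomial 𝔽) (RatFunc 𝔽)))
    simpa [RingHom.mapMatrix_apply] using this
  set R : Matrix (Fin k) (Fin k) (RatFunc 𝔽) :=
    D * (Tinv * U.map (algebraMap (Polynomial 𝔽) (RatFunc 𝔽))) with hR
  have hTinvUnit : IsUnit Tinv :=
    isUnit_iff_exists.mpr ⟨T.map (algebraMap (Polynomial 𝔽) (RatFunc 𝔽)), hT2, hT1⟩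
  have hRunit : IsUnit R := hD.mul (hTinvUnit.mul hUK)
  have hPmap : P.map (algebraMap (Polynomial 𝔽) (RatFunc 𝔽))
      = G₀.map (algebraMap (Polynomial 𝔽) (RatFunc 𝔽)) * T.map (algebraMap (Polynomial 𝔽) (RatFunc 𝔽)) := by
    rw [hPT, Matrix.map_mul]
  have hGR : G * R = G'.map (algebraMap (Polynomial 𝔽) (RatFunc 𝔽)) := by
    rw [hR, ← Matrix.mul_assoc, ← Matrix.mul_assoc, hGD, hPmap,
      Matrix.mul_assoc (G₀.map (algebraMap (Polynomial 𝔽) (RatFunc 𝔽))) _ Tinv, hT1,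
      Matrix.mul_one, hG'def, Matrix.map_mul]
  have hmapcomp : ∀ (M : Matrix (Fin n) (Fin k) (Polynomial 𝔽)),
      M.map (algebraMap (Polynomial 𝔽) (LaurentSeries 𝔽))
        = (M.map (algebraMap (Polynomial 𝔽) (RatFunc 𝔽))).map
            (algebraMap (RatFunc 𝔽) (LaurentSeries 𝔽)) := by
    intro M
    rw [Matrix.map_map]
    apply Matrix.ext
    intro i j
    exact IsScalarTower.algebraMap_apply (Polynomial 𝔽) (RatFunc 𝔽) (LaurentSeries 𝔽) (M i j)
  have hspan' : Submodule.span (LaurentSeries 𝔽)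
      (Set.range (G'.map (algebraMap (Polynomial 𝔽) (LaurentSeries 𝔽)))ᵀ)
      = Submodule.span (LaurentSeries 𝔽)
        (Set.range (G.map (algebraMap (RatFunc 𝔽) (LaurentSeries 𝔽)))ᵀ) := by
    rw [hmapcomp G', ← hGR, Matrix.map_mul]
    have hRK : IsUnit (R.map (algebraMap (RatFunc 𝔽) (LaurentSeries 𝔽))) := by
      have := hRunit.map (RingHom.mapMatrix (algebraMap (RatFunc 𝔽) (LaurentSeries 𝔽)))
      simpa [RingHom.mapMatrix_apply] using this
    exact MBE.span_cols_mul_unit _ _ hRK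
  refine ⟨R, G', hRunit, hGR, hrp', hcr, ?_⟩
  intro G₁ hrp₁ hcr₁ hspan₁
  obtain ⟨Uu, Vu, h₁, h₂, _, _⟩ := MBE.exists_unimodular_of_span_eq G₁ G' hrp₁ hrp'
    (by rw [hspan₁, ← hspan'])
  exact MBE.colDeg_multiset_eq G₁ G' hrp₁ hrp' hcr₁ hcr Uu Vu h₁ h₂
end

section
/- Let C ⊆ 𝔽((z))^n ⊆ (𝔽^n)^ℤ be a nonzero 𝔽((z))-subspace admitting a basis of vectors in 𝔽(z)^n. Then C is not a closed subset of (𝔽^n)^ℤ, but its topological closure C̄ is 𝔽-linear, compact, irreducible, and shift-invariant. -/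
open Matrix
open scoped RatFunc

section ConvolutionalDefs

variable {𝔽 : Type} [Field 𝔽]

/-- A subset of a module is `𝔽`-linear. -/
def IsFLinearSet (𝔽 : Type) [Field 𝔽] {M : Type} [AddCommGroup M] [Module 𝔽 M]
    (C : Set M) : Prop :=
  (0 : M) ∈ C ∧ (∀ x ∈ C, ∀ y ∈ C, x + y ∈ C) ∧ ∀ (c : 𝔽), ∀ x ∈ C, c • x ∈ C

end ConvolutionalDefs

section AuxLemmas
variable {F : Type} [Field F]

lemma hahn_sum_coeff {ι : Type*} (s : Finset ι) (f : ι → LaurentSeries F) (t : ℤ) :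
    (∑ j ∈ s, f j).coeff t = ∑ j ∈ s, (f j).coeff t := by
  classical
  induction s using Finset.induction with
  | empty => simp
  | insert _ _ h ih => rw [Finset.sum_insert h, Finset.sum_insert h, HahnSeries.coeff_add, ih]

lemma window_lemma {D : ℕ} (h g s : LaurentSeries F) (t : ℤ)
    (hs : ∀ r : ℤ, r < 0 ∨ (D : ℤ) < r → s.coeff r = 0)
    (hagree : ∀ r : ℤ, t - D ≤ r → r ≤ t → h.coeff r = g.coeff r) :
    (h * s).coeff t = (g * s).coeff t := by
  have key : ((h - g) * s).coeff t = 0 := by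
    rw [HahnSeries.coeff_mul]
    refine Finset.sum_eq_zero fun ij hij => ?_
    rw [Finset.mem_addAntidiagonal] at hij
    obtain ⟨h1, h2, h3⟩ := hij
    rw [HahnSeries.mem_support] at h2
    have hs2 : ¬ (ij.2 < 0 ∨ (D:ℤ) < ij.2) := fun hc => h2 (hs _ hc)
    push_neg at hs2
    have : (h - g).coeff ij.1 = 0 := by
      rw [HahnSeries.coeff_sub, hagree ij.1 (by omega) (by omega), sub_self]
    rw [this, zero_mul]
  rw [sub_mul, HahnSeries.coeff_sub] at key
  exact sub_eq_zero.mp key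

lemma trunc_exists (h : LaurentSeries F) (A B : ℤ) :
    ∃ h' : LaurentSeries F, (∀ r : ℤ, A ≤ r → r ≤ B → h'.coeff r = h.coeff r) ∧
      (∀ r : ℤ, r < A ∨ B < r → h'.coeff r = 0) := by
  classical
  refine ⟨∑ r ∈ Finset.Icc A B, HahnSeries.single r (h.coeff r), fun r h1 h2 => ?_, fun r hr => ?_⟩
  · rw [hahn_sum_coeff]
    rw [Finset.sum_eq_single r]
    · exact HahnSeries.coeff_single_same r _
    · intro b _ hb
      exact HahnSeries.coeff_single_of_ne (Ne.symm hb)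
    · intro hnot
      exact absurd (Finset.mem_Icc.mpr ⟨h1, h2⟩) hnot
  · rw [hahn_sum_coeff]
    refine Finset.sum_eq_zero fun b hb => ?_
    rw [Finset.mem_Icc] at hb
    exact HahnSeries.coeff_single_of_ne (by omega)

lemma poly_coeff_bound (p : Polynomial F) (t : ℤ) (ht : t < 0 ∨ (p.natDegree : ℤ) < t) :
    (algebraMap (Polynomial F) (LaurentSeries F) p).coeff t = 0 := by
  rw [Polynomial.algebraMap_hahnSeries_apply]
  rw [show ((HahnSeries.ofPowerSeries ℤ F) (p : PowerSeries F)) = ((p : PowerSeries F) : LaurentSeries F) from rfl]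
  rw [PowerSeries.coeff_coe]
  rcases ht with ht | ht
  · rw [if_pos ht]
  · rw [if_neg (by omega), Polynomial.coeff_coe]
    exact Polynomial.coeff_eq_zero_of_natDegree_lt (by omega)

lemma shift_coeff (m : ℤ) (s : LaurentSeries F) (t : ℤ) :
    ((HahnSeries.single m (1:F) : LaurentSeries F) * s).coeff t = s.coeff (t - m) := by
  have := HahnSeries.coeff_single_mul_add (r := (1:F)) (x := s) (a := t - m) (b := m)
  rw [sub_add_cancel] at this
  rw [this, one_mul]

end AuxLemmas

set_option maxHeartbeats 2000000 in
/-- A nonzero `𝔽((z))`-subspace `C ⊆ 𝔽((z))^n` with a basis of rational vectors,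
viewed inside `(𝔽^n)^ℤ`, is not closed, but its closure is `𝔽`-linear, compact, irreducible
and shift-invariant. -/
theorem rational_code_not_closed_closure_is_code
    (𝔽 : Type) [Field 𝔽] [Fintype 𝔽] [TopologicalSpace 𝔽] [DiscreteTopology 𝔽]
    (n : ℕ) (C : Submodule (LaurentSeries 𝔽) (Fin n → LaurentSeries 𝔽))
    (hne : C ≠ ⊥)
    (hbasis : ∃ (k : ℕ) (v : Fin k → Fin n → RatFunc 𝔽),
      LinearIndependent (LaurentSeries 𝔽)
        (fun j i => algebraMap (RatFunc 𝔽) (LaurentSeries 𝔽) (v j i)) ∧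
      Submodule.span (LaurentSeries 𝔽)
        (Set.range fun j i => algebraMap (RatFunc 𝔽) (LaurentSeries 𝔽) (v j i)) = C) :
    ¬ IsClosed (lsToSeq '' (C : Set (Fin n → LaurentSeries 𝔽))) ∧
    IsFLinearSet 𝔽 (closure (lsToSeq '' (C : Set (Fin n → LaurentSeries 𝔽)))) ∧
    IsCompact (closure (lsToSeq '' (C : Set (Fin n → LaurentSeries 𝔽)))) ∧
    IrreducibleShift (closure (lsToSeq '' (C : Set (Fin n → LaurentSeries 𝔽)))) ∧
    ShiftInvariant (closure (lsToSeq '' (C : Set (Fin n → LaurentSeries 𝔽)))) := by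
  classical
  obtain ⟨k, v, hli, hspan⟩ := hbasis
  set vLS : Fin k → Fin n → LaurentSeries 𝔽 :=
    fun j i => algebraMap (RatFunc 𝔽) (LaurentSeries 𝔽) (v j i) with hvLS
  have hmemv : ∀ j, vLS j ∈ C := by
    intro j
    rw [← hspan]
    exact Submodule.subset_span ⟨j, rfl⟩
  set q : Polynomial 𝔽 := ∏ j : Fin k, ∏ i : Fin n, (v j i).denom with hqdef
  have hq0 : q ≠ 0 := by
    rw [hqdef]
    exact Finset.prod_ne_zero_iff.mpr fun j _ =>
      Finset.prod_ne_zero_iff.mpr fun i _ => RatFunc.denom_ne_zero _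
  set qR : RatFunc 𝔽 := algebraMap (Polynomial 𝔽) (RatFunc 𝔽) q with hqR
  have hqR0 : qR ≠ 0 := RatFunc.algebraMap_ne_zero hq0
  set qLS : LaurentSeries 𝔽 := algebraMap (RatFunc 𝔽) (LaurentSeries 𝔽) qR with hqLSdef
  have hqLS0 : qLS ≠ 0 := by
    rw [hqLSdef]
    intro hcon
    exact hqR0 (by
      apply (algebraMap (RatFunc 𝔽) (LaurentSeries 𝔽)).injective
      rw [hcon, map_zero])
  have hpoly : ∀ j i, ∃ pp : Polynomial 𝔽, qR * v j i = algebraMap (Polynomial 𝔽) (RatFunc 𝔽) pp := by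
    intro j i
    have hdvd : (v j i).denom ∣ q := by
      rw [hqdef]
      exact dvd_trans (Finset.dvd_prod_of_mem (fun i => (v j i).denom) (Finset.mem_univ i))
        (Finset.dvd_prod_of_mem (fun j => ∏ i : Fin n, (v j i).denom) (Finset.mem_univ j))
    obtain ⟨r, hr⟩ := hdvd
    refine ⟨r * (v j i).num, ?_⟩
    have hvnum := RatFunc.num_div_denom (v j i)
    have hd0 : algebraMap (Polynomial 𝔽) (RatFunc 𝔽) (v j i).denom ≠ 0 :=
      RatFunc.algebraMap_ne_zero (RatFunc.denom_ne_zero _)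
    have h2 : algebraMap (Polynomial 𝔽) (RatFunc 𝔽) (v j i).denom * v j i
        = algebraMap (Polynomial 𝔽) (RatFunc 𝔽) (v j i).num := by
      rw [mul_comm]
      exact ((div_eq_iff hd0).mp hvnum).symm
    rw [hqR, hr, _root_.map_mul, _root_.map_mul,
      mul_comm (algebraMap (Polynomial 𝔽) (RatFunc 𝔽) (v j i).denom), mul_assoc, h2]
  choose p hp using hpoly
  set D : ℕ := Finset.univ.sup (fun ji : Fin k × Fin n => (p ji.1 ji.2).natDegree) with hD
  set P : Fin k → Fin n → LaurentSeries 𝔽 := fun j i => qLS * vLS j i with hPdef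
  have hPalg : ∀ j i, P j i = algebraMap (Polynomial 𝔽) (LaurentSeries 𝔽) (p j i) := by
    intro j i
    rw [hPdef]
    simp only [hqLSdef, hvLS]
    rw [← _root_.map_mul, hp j i, IsScalarTower.algebraMap_apply (Polynomial 𝔽) (RatFunc 𝔽) (LaurentSeries 𝔽)]
  have hPcoeff0 : ∀ j i (t : ℤ), (t < 0 ∨ (D : ℤ) < t) → (P j i).coeff t = 0 := by
    intro j i t ht
    rw [hPalg j i]
    apply poly_coeff_bound
    rcases ht with ht | ht
    · exact Or.inl ht
    · right
      have hle : (p j i).natDegree ≤ D := Finset.le_sup (f := fun ji : Fin k × Fin n => (p ji.1 ji.2).natDegree) (Finset.mem_univ (j, i))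
      omega
  have hPmem : ∀ j, P j ∈ C := by
    intro j
    have : P j = qLS • vLS j := by
      funext i
      simp [hPdef, Pi.smul_apply, smul_eq_mul]
    rw [this]
    exact C.smul_mem qLS (hmemv j)
  set S : Set (ℤ → Fin n → 𝔽) := lsToSeq '' (C : Set (Fin n → LaurentSeries 𝔽)) with hSdef
  -- approximation by finitely supported codewords
  have happrox : ∀ u : Fin n → LaurentSeries 𝔽, u ∈ C → ∀ A B : ℤ,
      ∃ x, x ∈ C ∧ (∀ i (t : ℤ), A ≤ t → t ≤ B → (x i).coeff t = (u i).coeff t) ∧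
        (∀ i (t : ℤ), t < A - D ∨ B + D < t → (x i).coeff t = 0) := by
    intro u hu A B
    rw [← hspan] at hu
    obtain ⟨c, hc⟩ := (Submodule.mem_span_range_iff_exists_fun _).mp hu
    set d : Fin k → LaurentSeries 𝔽 := fun j => c j * qLS⁻¹ with hd
    have hdP : ∀ i : Fin n, ∑ j : Fin k, d j * P j i = u i := by
      intro i
      have hterm : ∀ j, d j * P j i = c j * vLS j i := by
        intro j
        rw [hd, hPdef]
        field_simp
      rw [Finset.sum_congr rfl (fun j _ => hterm j)]
      calc ∑ j, c j * vLS j i = (∑ j, c j • vLS j) i := by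
            rw [Finset.sum_apply]
            rfl
        _ = u i := by rw [hc]
    choose d' hd'1 hd'2 using fun j => trunc_exists (d j) (A - D) B
    refine ⟨fun i => ∑ j : Fin k, d' j * P j i, ?_, ?_, ?_⟩
    · have hrw : (fun i => ∑ j : Fin k, d' j * P j i) = ∑ j : Fin k, (d' j * qLS) • vLS j := by
        funext i
        rw [Finset.sum_apply]
        refine Finset.sum_congr rfl fun j _ => ?_
        simp only [Pi.smul_apply, smul_eq_mul, hPdef]
        ring
      rw [hrw]
      exact Submodule.sum_mem _ fun j _ => C.smul_mem _ (hmemv j)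
    · intro i t h1 h2
      rw [← hdP i, hahn_sum_coeff, hahn_sum_coeff]
      refine Finset.sum_congr rfl fun j _ => ?_
      refine window_lemma (D := D) _ _ _ _ (fun r hr => hPcoeff0 j i r hr) ?_
      intro r hr1 hr2
      exact hd'1 j r (by omega) (by omega)
    · intro i t ht
      rw [hahn_sum_coeff]
      refine Finset.sum_eq_zero fun j _ => ?_
      rw [HahnSeries.coeff_mul]
      refine Finset.sum_eq_zero fun ij hij => ?_
      rw [Finset.mem_addAntidiagonal] at hij
      obtain ⟨h1, h2, h3⟩ := hij
      rw [HahnSeries.mem_support] at h1 h2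
      have b1 : ¬(ij.1 < A - D ∨ B < ij.1) := fun hcc => h1 (hd'2 j _ hcc)
      have b2 : ¬(ij.2 < 0 ∨ (D:ℤ) < ij.2) := fun hcc => h2 (hPcoeff0 j i _ hcc)
      push_neg at b1 b2
      exfalso
      omega
  -- any block occurring in the closure occurs in a finitely supported codeword
  have hblock : ∀ β : List (Fin n → 𝔽), OccursInSome β (closure S) →
      ∃ x, x ∈ C ∧ ∃ j : ℤ, (∀ l : Fin β.length, β.get l = lsToSeq x (j + ((l:ℕ):ℤ))) ∧
        (∀ i (t : ℤ), t < j - D → (x i).coeff t = 0) ∧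
        (∀ i (t : ℤ), j + β.length + D < t → (x i).coeff t = 0) := by
    intro β hβ
    obtain ⟨w, hw, j, hj⟩ := hβ
    set U : Set (ℤ → Fin n → 𝔽) := {w' | ∀ t ∈ Finset.Icc j (j + (β.length:ℤ)), w' t = w t} with hUdef
    have hU : IsOpen U := by
      have hrw : U = ⋂ t ∈ Finset.Icc j (j + (β.length:ℤ)), (fun w' : ℤ → Fin n → 𝔽 => w' t) ⁻¹' {w t} := by
        ext w'
        simp [hUdef, Set.mem_iInter]
      rw [hrw]
      exact isOpen_biInter_finset fun t _ =>
        (continuous_apply t).isOpen_preimage _ (isOpen_discrete _)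
    have hwU : w ∈ U := fun t _ => rfl
    obtain ⟨y, hyU, hyS⟩ := mem_closure_iff.mp hw _ hU hwU
    obtain ⟨u, huC, rfl⟩ := hyS
    obtain ⟨x, hxC, hxag, hxsupp⟩ := happrox u huC j (j + β.length)
    refine ⟨x, hxC, j, ?_, ?_, ?_⟩
    · intro l
      have hl : j + ((l:ℕ):ℤ) ∈ Finset.Icc j (j + (β.length:ℤ)) := by
        rw [Finset.mem_Icc]
        have := l.isLt
        omega
      have e1 : lsToSeq x (j + ((l:ℕ):ℤ)) = lsToSeq u (j + ((l:ℕ):ℤ)) := by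
        funext i
        exact hxag i _ (by omega) (by have := l.isLt; omega)
      rw [hj l, ← hyU _ hl, e1]
    · intro i t ht
      exact hxsupp i t (Or.inl (by omega))
    · intro i t ht
      exact hxsupp i t (Or.inr (by omega))
  -- nonzero generator with finite support
  obtain ⟨u0, hu0C, hu0ne⟩ := (Submodule.ne_bot_iff C).mp hne
  have hexj : ∃ j0 : Fin k, vLS j0 ≠ 0 := by
    by_contra hall
    push_neg at hall
    rw [← hspan] at hu0C
    obtain ⟨c, hc⟩ := (Submodule.mem_span_range_iff_exists_fun _).mp hu0C
    apply hu0ne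
    rw [← hc]
    exact Finset.sum_eq_zero fun j _ => by rw [hall j, smul_zero]
  obtain ⟨j0, hj0⟩ := hexj
  have hPj0 : P j0 ≠ 0 := by
    intro hcon
    apply hj0
    funext i
    have hz : qLS * vLS j0 i = 0 := congrFun hcon i
    rcases mul_eq_zero.mp hz with h | h
    · exact absurd h hqLS0
    · exact h
  obtain ⟨i0, hi0⟩ : ∃ i0, P j0 i0 ≠ 0 := by
    by_contra hall
    push_neg at hall
    exact hPj0 (funext hall)
  obtain ⟨t0, ht0⟩ : ∃ t0 : ℤ, (P j0 i0).coeff t0 ≠ 0 := by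
    by_contra hall
    push_neg at hall
    exact hi0 (HahnSeries.ext (funext hall))
  have ht0b : 0 ≤ t0 ∧ t0 ≤ (D:ℤ) := by
    by_contra hcc
    exact ht0 (hPcoeff0 j0 i0 t0 (by omega))
  -- the periodic limit point
  set Pn : ℕ := D + 1 with hPndef
  have hPnz : (0:ℤ) < (Pn:ℤ) := by exact_mod_cast Nat.succ_pos D
  have hPnD : (Pn:ℤ) = (D:ℤ) + 1 := by rw [hPndef]; push_cast; ring
  set winf : ℤ → Fin n → 𝔽 := fun t a => (P j0 a).coeff (t % (Pn:ℤ)) with hwinf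
  set cm : ℕ → LaurentSeries 𝔽 :=
    fun m => ∑ jj ∈ Finset.range (2*m+1), HahnSeries.single (((jj:ℤ) - (m:ℤ)) * (Pn:ℤ)) (1:𝔽) with hcm
  have hum : ∀ m, cm m • P j0 ∈ C := fun m => C.smul_mem _ (hPmem j0)
  have hcoeff : ∀ (m : ℕ) (t : ℤ), -(m:ℤ)*(Pn:ℤ) ≤ t → t ≤ (m:ℤ)*(Pn:ℤ) →
      ∀ a, ((cm m • P j0) a).coeff t = winf t a := by
    intro m t hb1 hb2 a
    have hexp : (cm m • P j0) a
        = ∑ jj ∈ Finset.range (2*m+1), HahnSeries.single (((jj:ℤ) - (m:ℤ)) * (Pn:ℤ)) (1:𝔽) * P j0 a := by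
      rw [Pi.smul_apply, smul_eq_mul, hcm, Finset.sum_mul]
    rw [hexp, hahn_sum_coeff]
    set e : ℤ := t / (Pn:ℤ) with he
    set ρ : ℤ := t % (Pn:ℤ) with hρ
    have hed : t = (Pn:ℤ) * e + ρ := (Int.mul_ediv_add_emod t (Pn:ℤ)).symm
    have hρ1 : 0 ≤ ρ := Int.emod_nonneg t (by omega)
    have hρ2 : ρ < (Pn:ℤ) := Int.emod_lt_of_pos t hPnz
    have heb1 : -(m:ℤ) ≤ e := by
      have h1 : -(m:ℤ) * (Pn:ℤ) ≤ (Pn:ℤ) * e + ρ := by omega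
      nlinarith
    have heb2 : e ≤ (m:ℤ) := by
      have h1 : (Pn:ℤ) * e + ρ ≤ (m:ℤ) * (Pn:ℤ) := by omega
      nlinarith
    set jstar : ℕ := (e + (m:ℤ)).toNat with hjstar
    have hjs : ((jstar:ℤ) - (m:ℤ)) = e := by
      rw [hjstar]
      omega
    rw [Finset.sum_eq_single jstar]
    · rw [shift_coeff, hjs]
      have harg : t - e * (Pn:ℤ) = ρ := by linear_combination hed
      rw [harg]
    · intro b hbmem hbne
      rw [shift_coeff]
      apply hPcoeff0 j0 a
      have hδ : e - ((b:ℤ) - (m:ℤ)) ≠ 0 := by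
        intro hcon
        apply hbne
        rw [hjstar]
        omega
      have heq : t - ((b:ℤ) - (m:ℤ)) * (Pn:ℤ) = ρ + (Pn:ℤ) * (e - ((b:ℤ) - (m:ℤ))) := by
        linear_combination hed
      rcases lt_or_gt_of_ne hδ with hlt | hgt
      · left
        have h1 : e - ((b:ℤ) - (m:ℤ)) ≤ -1 := by omega
        have h2 : (Pn:ℤ) * (e - ((b:ℤ) - (m:ℤ))) ≤ (Pn:ℤ) * (-1) := by
          exact mul_le_mul_of_nonneg_left h1 (by omega)
        linarith
      · right
        have h1 : (1:ℤ) ≤ e - ((b:ℤ) - (m:ℤ)) := by omega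
        have h2 : (Pn:ℤ) * 1 ≤ (Pn:ℤ) * (e - ((b:ℤ) - (m:ℤ))) := by
          exact mul_le_mul_of_nonneg_left h1 (by omega)
        linarith
    · intro hnotmem
      exfalso
      apply hnotmem
      rw [Finset.mem_range]
      omega
  have hwinf_cl : winf ∈ closure S := by
    refine mem_closure_of_tendsto (f := fun m : ℕ => lsToSeq (cm m • P j0))
      (b := Filter.atTop) (s := S) ?_ ?_
    · rw [tendsto_pi_nhds]
      intro t
      refine Filter.Tendsto.congr' ?_ (tendsto_const_nhds (x := winf t))
      filter_upwards [Filter.eventually_ge_atTop (t.natAbs + 1)] with m hm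
      have h1 : (t.natAbs : ℤ) ≤ (m:ℤ) := by
        have h0 : t.natAbs ≤ m := by omega
        exact_mod_cast h0
      have h2 : (m:ℤ) * 1 ≤ (m:ℤ) * (Pn:ℤ) := by
        refine mul_le_mul_of_nonneg_left (by omega) (by omega)
      have habs1 : t ≤ (t.natAbs:ℤ) := Int.le_natAbs
      have habs2 : -((t.natAbs:ℤ)) ≤ t := by omega
      funext a
      exact (hcoeff m t (by linarith) (by linarith) a).symm
    · exact Filter.Eventually.of_forall fun m => ⟨cm m • P j0, hum m, rfl⟩
  have hwinf_not : winf ∉ S := by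
    rintro ⟨u, huC, hu⟩
    have hkey : ∀ m : ℕ, (u i0).coeff (t0 - (m:ℤ)*(Pn:ℤ)) ≠ 0 := by
      intro m
      have h1 : winf (t0 - (m:ℤ)*(Pn:ℤ)) i0 = (P j0 i0).coeff t0 := by
        have hmod : (t0 - (m:ℤ)*(Pn:ℤ)) % (Pn:ℤ) = t0 := by
          have hrw : t0 - (m:ℤ)*(Pn:ℤ) = t0 + (Pn:ℤ) * (-(m:ℤ)) := by ring
          rw [hrw, Int.add_mul_emod_self_left, Int.emod_eq_of_lt ht0b.1 (by omega)]
        show (P j0 i0).coeff ((t0 - (m:ℤ)*(Pn:ℤ)) % (Pn:ℤ)) = (P j0 i0).coeff t0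
        rw [hmod]
      have h2 : (u i0).coeff (t0 - (m:ℤ)*(Pn:ℤ)) = winf (t0 - (m:ℤ)*(Pn:ℤ)) i0 := by
        rw [← hu]
        rfl
      rw [h2, h1]
      exact ht0
    have hWF := (u i0).isWF_support
    have hne' : (u i0).support.Nonempty := by
      refine ⟨t0, ?_⟩
      have := hkey 0
      simpa using this
    have hmin : ∀ m : ℕ, hWF.min hne' ≤ t0 - (m:ℤ)*(Pn:ℤ) := fun m => hWF.min_le hne' (hkey m)
    set μ0 : ℤ := hWF.min hne' with hμ0
    have hcon := hmin ((t0 - μ0).toNat + 1)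
    set mm : ℕ := (t0 - μ0).toNat + 1 with hmm
    have hmge : (mm:ℤ) * 1 ≤ (mm:ℤ) * (Pn:ℤ) := mul_le_mul_of_nonneg_left (by omega) (by omega)
    have : t0 - μ0 + 1 ≤ (mm:ℤ) := by omega
    linarith
  have hnotclosed : ¬ IsClosed S := by
    intro hcl
    rw [hcl.closure_eq] at hwinf_cl
    exact hwinf_not hwinf_cl
  -- linearity of the closure
  haveI : ContinuousAdd 𝔽 := ⟨continuous_of_discreteTopology⟩
  have h0S : (0 : ℤ → Fin n → 𝔽) ∈ S := by
    refine ⟨0, C.zero_mem, ?_⟩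
    funext t a
    simp [lsToSeq]
  have hSadd : ∀ x ∈ S, ∀ y ∈ S, x + y ∈ S := by
    rintro _ ⟨ux, hux, rfl⟩ _ ⟨uy, huy, rfl⟩
    refine ⟨ux + uy, C.add_mem hux huy, ?_⟩
    funext t a
    simp [lsToSeq, HahnSeries.coeff_add]
  have hadd_cl : ∀ x ∈ closure S, ∀ y ∈ closure S, x + y ∈ closure S := by
    intro x hx y hy
    have hcont : Continuous (fun pq : (ℤ → Fin n → 𝔽) × (ℤ → Fin n → 𝔽) => pq.1 + pq.2) :=
      continuous_add
    have h1 : (x, y) ∈ closure (S ×ˢ S) := by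
      rw [closure_prod_eq]
      exact ⟨hx, hy⟩
    have h2 : x + y ∈ closure ((fun pq : (ℤ → Fin n → 𝔽) × (ℤ → Fin n → 𝔽) => pq.1 + pq.2) '' (S ×ˢ S)) :=
      image_closure_subset_closure_image hcont ⟨(x, y), h1, rfl⟩
    refine closure_mono ?_ h2
    rintro _ ⟨⟨a, b⟩, ⟨ha, hb⟩, rfl⟩
    exact hSadd a ha b hb
  have hsmul_cl : ∀ (c : 𝔽), ∀ x ∈ closure S, c • x ∈ closure S := by
    intro c x hx
    have hcont : Continuous (fun w : ℤ → Fin n → 𝔽 => c • w) := by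
      refine continuous_pi fun t => continuous_pi fun a => ?_
      exact Continuous.comp continuous_of_discreteTopology
        ((continuous_apply a).comp (continuous_apply t))
    have hSsm : ∀ y ∈ S, c • y ∈ S := by
      rintro _ ⟨u, hu, rfl⟩
      refine ⟨(HahnSeries.single (0:ℤ) c : LaurentSeries 𝔽) • u, C.smul_mem _ hu, ?_⟩
      funext t a
      have h1 : ((HahnSeries.single (0:ℤ) c : LaurentSeries 𝔽) * u a).coeff t = c * (u a).coeff t := by
        have := HahnSeries.coeff_single_mul_add (r := c) (x := u a) (a := t) (b := (0:ℤ))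
        rw [add_zero] at this
        exact this
      simpa [lsToSeq, Pi.smul_apply, smul_eq_mul] using h1
    have h2 : c • x ∈ closure ((fun w : ℤ → Fin n → 𝔽 => c • w) '' S) :=
      image_closure_subset_closure_image hcont ⟨x, hx, rfl⟩
    refine closure_mono ?_ h2
    rintro _ ⟨y, hy, rfl⟩
    exact hSsm y hy
  -- compactness
  have hcompact : IsCompact (closure S) := isClosed_closure.isCompact
  -- shift invariance
  have hshift : ShiftInvariant (closure S) := by
    intro w hw
    have hcont : Continuous (shiftZ (A := Fin n → 𝔽)) :=
      continuous_pi fun t => continuous_apply (t + 1)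
    have hSsh : ∀ y ∈ S, shiftZ y ∈ S := by
      rintro _ ⟨u, hu, rfl⟩
      refine ⟨(HahnSeries.single (-1:ℤ) (1:𝔽) : LaurentSeries 𝔽) • u, C.smul_mem _ hu, ?_⟩
      funext t a
      have h1 : ((HahnSeries.single (-1:ℤ) (1:𝔽) : LaurentSeries 𝔽) * u a).coeff t
          = (u a).coeff (t + 1) := by
        have h0 := shift_coeff (-1:ℤ) (u a) t
        rw [show t - (-1:ℤ) = t + 1 from by ring] at h0
        exact h0
      simpa [lsToSeq, shiftZ, Pi.smul_apply, smul_eq_mul] using h1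
    have h2 : shiftZ w ∈ closure (shiftZ (A := Fin n → 𝔽) '' S) :=
      image_closure_subset_closure_image hcont ⟨w, hw, rfl⟩
    refine closure_mono ?_ h2
    rintro _ ⟨y, hy, rfl⟩
    exact hSsh y hy
  -- irreducibility
  have hirr : IrreducibleShift (closure S) := by
    intro β γ hβ hγ
    obtain ⟨x, hxC, j1, hx, hxlo, hxhi⟩ := hblock β hβ
    obtain ⟨y, hyC, j2, hy, hylo, hyhi⟩ := hblock γ hγ
    set lo2 : ℤ := j2 - D with hlo2
    set hi1 : ℤ := j1 + β.length + D with hhi1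
    set m : ℤ := max (max (hi1 + 1 - j2) (j1 + (β.length:ℤ) - lo2)) (j1 + (β.length:ℤ) - j2) with hm
    have hm1 : hi1 + 1 - j2 ≤ m := le_trans (le_max_left _ _) (le_max_left _ _)
    have hm2 : j1 + (β.length:ℤ) - lo2 ≤ m := le_trans (le_max_right _ _) (le_max_left _ _)
    have hm3 : j1 + (β.length:ℤ) - j2 ≤ m := le_max_right _ _
    set w2 : Fin n → LaurentSeries 𝔽 := x + (HahnSeries.single m (1:𝔽) : LaurentSeries 𝔽) • y with hw2
    have hw2C : w2 ∈ C := C.add_mem hxC (C.smul_mem _ hyC)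
    have hw2coeff : ∀ a t, (w2 a).coeff t = (x a).coeff t + (y a).coeff (t - m) := by
      intro a t
      have hrfl : w2 a = x a + (HahnSeries.single m (1:𝔽) : LaurentSeries 𝔽) * y a := rfl
      rw [hrfl, HahnSeries.coeff_add, shift_coeff]
    set L : ℕ := (j2 + m - (j1 + (β.length:ℤ))).toNat with hLdef
    have hLz : (L:ℤ) = j2 + m - (j1 + (β.length:ℤ)) := Int.toNat_of_nonneg (by omega)
    set μ : List (Fin n → 𝔽) :=
      List.ofFn (fun l : Fin L => lsToSeq w2 (j1 + (β.length:ℤ) + ((l:ℕ):ℤ))) with hμ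
    have hμlen : μ.length = L := by rw [hμ, List.length_ofFn]
    refine ⟨μ, lsToSeq w2, subset_closure ⟨w2, hw2C, rfl⟩, j1, ?_⟩
    intro l
    have hX : (β ++ μ).length = β.length + L := by
      rw [List.length_append, hμlen]
    have hltot : (l:ℕ) < β.length + L + γ.length := by
      have h0 := l.isLt
      have h1 : (β ++ μ ++ γ).length = β.length + μ.length + γ.length := by
        rw [List.length_append, List.length_append]
      omega
    rw [List.get_eq_getElem]
    by_cases hc1 : (l:ℕ) < β.length
    · have hble : (l:ℕ) < (β ++ μ).length := by omega
      have e1 : (β ++ μ ++ γ)[(l:ℕ)]'(l.isLt) = β[(l:ℕ)]'hc1 :=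
        (List.getElem_append_left hble).trans (List.getElem_append_left hc1)
      have e2 : β[(l:ℕ)]'hc1 = lsToSeq x (j1 + ((l:ℕ):ℤ)) := by
        simpa [List.get_eq_getElem] using hx ⟨(l:ℕ), hc1⟩
      refine (e1.trans e2).trans ?_
      funext a
      show (x a).coeff (j1 + ((l:ℕ):ℤ)) = (w2 a).coeff (j1 + ((l:ℕ):ℤ))
      rw [hw2coeff]
      rw [hylo a (j1 + ((l:ℕ):ℤ) - m) (by omega), add_zero]
    · by_cases hc2 : (l:ℕ) < β.length + L
      · have hble : (l:ℕ) < (β ++ μ).length := by omega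
        have hge : β.length ≤ (l:ℕ) := le_of_not_gt hc1
        have hsub : (l:ℕ) - β.length < μ.length := by omega
        have e1 : (β ++ μ ++ γ)[(l:ℕ)]'(l.isLt) = μ[(l:ℕ) - β.length]'hsub :=
          (List.getElem_append_left hble).trans (List.getElem_append_right hge)
        have e2 : μ[(l:ℕ) - β.length]'hsub
            = lsToSeq w2 (j1 + (β.length:ℤ) + (((l:ℕ) - β.length : ℕ):ℤ)) := by
          simp only [hμ, List.getElem_ofFn]
        refine (e1.trans e2).trans ?_
        congr 1
        push_cast [Nat.cast_sub hge]
        ring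
      · have hge2 : (β ++ μ).length ≤ (l:ℕ) := by omega
        have hr' : (l:ℕ) - (β ++ μ).length < γ.length := by omega
        have e1 : (β ++ μ ++ γ)[(l:ℕ)]'(l.isLt) = γ[(l:ℕ) - (β ++ μ).length]'hr' :=
          List.getElem_append_right hge2
        have e2 : γ[(l:ℕ) - (β ++ μ).length]'hr'
            = lsToSeq y (j2 + ((((l:ℕ) - (β ++ μ).length : ℕ)):ℤ)) := by
          simpa [List.get_eq_getElem] using hy ⟨(l:ℕ) - (β ++ μ).length, hr'⟩
        refine (e1.trans e2).trans ?_
        funext a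
        show (y a).coeff (j2 + ((((l:ℕ) - (β ++ μ).length : ℕ)):ℤ))
            = (w2 a).coeff (j1 + ((l:ℕ):ℤ))
        rw [hw2coeff]
        have hx0 : (x a).coeff (j1 + ((l:ℕ):ℤ)) = 0 := by
          apply hxhi
          omega
        have harg : j1 + ((l:ℕ):ℤ) - m = j2 + ((((l:ℕ) - (β ++ μ).length : ℕ)):ℤ) := by
          omega
        rw [hx0, zero_add, harg]
  exact ⟨hnotclosed, ⟨subset_closure h0S, hadd_cl, hsmul_cl⟩, hcompact, hirr, hshift⟩
end

section
/- Let G(z) be an n×k matrix over the Laurent polynomial ring 𝔽[z,z^{-1}] of rank k, and let C = { G(z)m(z) : m(z) ∈ 𝔽^k[z,z^{-1}] } ⊆ 𝔽^n[z,z^{-1}]. The following are equivalent: (i) C is observable; (ii) G(z) is right prime over 𝔽[z,z^{-1}]; (iii) C has a kernel representation, i.e. there exist r ≥ 0 and an r×n matrix H(z) over 𝔽[z,z^{-1}] such that C = { v(z) ∈ 𝔽^n[z,z^{-1}] : H(z)v(z) = 0 }. -/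
open Matrix

section ConvolutionalDefs

variable {𝔽 : Type} [Field 𝔽]

/-- A subset of a module is `𝔽`-linear. -/
def IsLinearSetF (𝔽 : Type) [Field 𝔽] {M : Type} [AddCommGroup M] [Module 𝔽 M]
    (C : Set M) : Prop :=
  (0 : M) ∈ C ∧ (∀ x ∈ C, ∀ y ∈ C, x + y ∈ C) ∧ ∀ (c : 𝔽), ∀ x ∈ C, c • x ∈ C

end ConvolutionalDefs

/-- A set of finite-support (Laurent polynomial) vectors is observable if for some `N`,
whenever the supports of `v` and `v'` are separated by a distance of at least `N` and
`v + v' ∈ C`, then `v ∈ C` and `v' ∈ C`. -/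
def ObservableCode {𝔽 : Type} [Field 𝔽] {n : ℕ}
    (C : Set (Fin n → LaurentPolynomial 𝔽)) : Prop :=
  ∃ N : ℕ, ∀ v v' : Fin n → LaurentPolynomial 𝔽,
    (∀ s t : ℤ, (∃ a, (v a).coeff s ≠ 0) → (∃ a, (v' a).coeff t ≠ 0) → (N : ℤ) ≤ |t - s|) →
    v + v' ∈ C → v ∈ C ∧ v' ∈ C


open LaurentPolynomial Pointwise

instance laurentIsDomain (𝔽 : Type) [Field 𝔽] : IsDomain (LaurentPolynomial 𝔽) := by
  have h1 : NoZeroDivisors (LaurentPolynomial 𝔽) := by unfold LaurentPolynomial; infer_instance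
  have h2 : Nontrivial (LaurentPolynomial 𝔽) := by unfold LaurentPolynomial; infer_instance
  exact NoZeroDivisors.to_isDomain _

instance laurentIsPID (𝔽 : Type) [Field 𝔽] : IsPrincipalIdealRing (LaurentPolynomial 𝔽) := by
  haveI := LaurentPolynomial.isLocalization (R := 𝔽)
  constructor
  intro I
  obtain ⟨a, ha⟩ := (IsPrincipalIdealRing.principal
    (Ideal.comap (algebraMap (Polynomial 𝔽) (LaurentPolynomial 𝔽)) I)).1
  refine ⟨algebraMap (Polynomial 𝔽) (LaurentPolynomial 𝔽) a, ?_⟩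
  have h := IsLocalization.map_comap (Submonoid.powers (Polynomial.X : Polynomial 𝔽))
    (LaurentPolynomial 𝔽) I
  change Ideal.map (algebraMap (Polynomial 𝔽) (LaurentPolynomial 𝔽))
    (Ideal.comap (algebraMap (Polynomial 𝔽) (LaurentPolynomial 𝔽)) I) = I at h
  rw [ha] at h
  rw [← h, Ideal.submodule_span_eq, Ideal.map_span, Set.image_singleton]

lemma exists_T_pow_sub_one_dvd {𝔽 : Type} [Field 𝔽] [Fintype 𝔽]
    (q : LaurentPolynomial 𝔽) (hq : q ≠ 0) :
    ∃ m : ℕ, 0 < m ∧ q ∣ (T (m : ℤ) - 1) := by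
  classical
  obtain ⟨d, p', hp'⟩ := q.exists_T_pow
  have hp'0 : p' ≠ 0 := by
    intro h
    rw [h, map_zero] at hp'
    rcases mul_eq_zero.1 hp'.symm with h' | h'
    · exact hq h'
    · exact (LaurentPolynomial.isUnit_T (d : ℤ)).ne_zero h'
  set p := p' * Polynomial.C p'.leadingCoeff⁻¹ with hpdef
  have hmonic : p.Monic := Polynomial.monic_mul_leadingCoeff_inv hp'0
  have hp0 : p ≠ 0 := hmonic.ne_zero
  have hqp : q ∣ Polynomial.toLaurent p := by
    refine ⟨T (d : ℤ) * Polynomial.toLaurent (Polynomial.C p'.leadingCoeff⁻¹), ?_⟩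
    rw [hpdef, _root_.map_mul, hp']; ring
  have hfin : Finite ↥(Polynomial.degreeLT 𝔽 p.natDegree) :=
    Finite.of_equiv _ (Polynomial.degreeLTEquiv 𝔽 _).toEquiv.symm
  have hmem : ∀ i : ℕ, (Polynomial.X ^ i %ₘ p) ∈ Polynomial.degreeLT 𝔽 p.natDegree := fun i =>
    Polynomial.mem_degreeLT.2 (by
      have h := Polynomial.degree_modByMonic_lt (Polynomial.X ^ i) hmonic
      rwa [Polynomial.degree_eq_natDegree hp0] at h)
  obtain ⟨i, j, hij, heq⟩ := Finite.exists_ne_map_eq_of_infinite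
    (fun i : ℕ => (⟨Polynomial.X ^ i %ₘ p, hmem i⟩ : ↥(Polynomial.degreeLT 𝔽 p.natDegree)))
  wlog hlt : i < j generalizing i j
  · exact this j i hij.symm heq.symm (by omega)
  have hsub : Polynomial.X ^ i %ₘ p = Polynomial.X ^ j %ₘ p := congrArg Subtype.val heq
  have hdvd : p ∣ Polynomial.X ^ j - Polynomial.X ^ i := by
    have h1 := Polynomial.modByMonic_add_div (Polynomial.X ^ j : Polynomial 𝔽) p
    have h2 := Polynomial.modByMonic_add_div (Polynomial.X ^ i : Polynomial 𝔽) p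
    refine ⟨Polynomial.X ^ j /ₘ p - Polynomial.X ^ i /ₘ p, ?_⟩
    rw [mul_sub]
    conv_lhs => rw [← h1, ← h2, hsub]
    ring
  have hfact : (Polynomial.X ^ j - Polynomial.X ^ i : Polynomial 𝔽) =
      Polynomial.X ^ i * (Polynomial.X ^ (j - i) - 1) := by
    rw [mul_sub, mul_one, ← pow_add]
    congr 2
    omega
  refine ⟨j - i, by omega, ?_⟩
  have hdvd2 : q ∣ T ((i : ℕ) : ℤ) * (T ((j - i : ℕ) : ℤ) - 1) := by
    have := hqp.trans (map_dvd Polynomial.toLaurent (hfact ▸ hdvd))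
    rwa [_root_.map_mul, map_sub, _root_.map_one, Polynomial.toLaurent_X_pow, Polynomial.toLaurent_X_pow]
      at this
  have h3 : (T (-(i : ℤ)) * (T ((i : ℕ) : ℤ) * (T ((j - i : ℕ) : ℤ) - 1)) :
      LaurentPolynomial 𝔽) = T ((j - i : ℕ) : ℤ) - 1 := by
    rw [← mul_assoc, ← T_add, neg_add_cancel, T_zero, one_mul]
  exact h3 ▸ hdvd2.mul_left _

set_option maxHeartbeats 1000000 in
/-- For a full column rank `n×k` Laurent polynomial matrix `G(z)` with column
module `C = {G(z)m(z)}`, observability of `C`, right primeness of `G(z)` and the existence of a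
kernel (parity check) representation of `C` are equivalent. -/
theorem observable_iff_rightPrime_iff_kernel
    (𝔽 : Type) [Field 𝔽] [Fintype 𝔽]
    (n k : ℕ) (G : Matrix (Fin n) (Fin k) (LaurentPolynomial 𝔽))
    (hG : LinearIndependent (LaurentPolynomial 𝔽) Gᵀ)
    (C : Set (Fin n → LaurentPolynomial 𝔽))
    (hC : C = Set.range G.mulVec) :
    List.TFAE
      [ ObservableCode C,
        RightPrime G,
        ∃ (r : ℕ) (H : Matrix (Fin r) (Fin n) (LaurentPolynomial 𝔽)),
          C = { v : Fin n → LaurentPolynomial 𝔽 | H.mulVec v = 0 } ] := by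
  classical
  haveI : IsDomain (LaurentPolynomial 𝔽) := laurentIsDomain 𝔽
  haveI : IsPrincipalIdealRing (LaurentPolynomial 𝔽) := laurentIsPID 𝔽
  tfae_have 2 → 3 := by
    rintro ⟨L, hL⟩
    refine ⟨n, 1 - G * L, ?_⟩
    rw [hC]
    ext v
    simp only [Set.mem_range, Set.mem_setOf_eq, Matrix.sub_mulVec, Matrix.one_mulVec,
      sub_eq_zero]
    constructor
    · rintro ⟨m, rfl⟩
      rw [Matrix.mulVec_mulVec, Matrix.mul_assoc, hL, Matrix.mul_one]
    · intro hv
      refine ⟨L.mulVec v, ?_⟩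
      rw [Matrix.mulVec_mulVec, ← hv]
  tfae_have 3 → 1 := by
    rintro ⟨r, H, hH⟩
    set D : ℕ := Finset.univ.sup
      (fun p : Fin r × Fin n => (H p.1 p.2).coeff.support.sup Int.natAbs) with hD
    have hbound : ∀ (i : Fin r) (j : Fin n) (s : ℤ), (H i j).coeff s ≠ 0 → s.natAbs ≤ D := by
      intro i j s hs
      calc s.natAbs ≤ (H i j).coeff.support.sup Int.natAbs :=
            Finset.le_sup (Finsupp.mem_support_iff.2 hs)
        _ ≤ D := Finset.le_sup (f := fun p : Fin r × Fin n =>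
            (H p.1 p.2).coeff.support.sup Int.natAbs) (Finset.mem_univ (i, j))
    have key : ∀ (w : Fin n → LaurentPolynomial 𝔽) (i : Fin r) (t : ℤ),
        (H.mulVec w i).coeff t ≠ 0 → ∃ (b : Fin n) (s : ℤ),
          (t - s).natAbs ≤ D ∧ (w b).coeff s ≠ 0 := by
      intro w i t ht
      have hsum : (H.mulVec w i).coeff t = ∑ b : Fin n, ((H i b * w b : LaurentPolynomial 𝔽)).coeff t := by
        rw [← Finsupp.finset_sum_apply, ← AddMonoidAlgebra.coeff_sum]
        rfl
      rw [hsum] at ht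
      obtain ⟨b, _, hb⟩ := Finset.exists_ne_zero_of_sum_ne_zero ht
      have hmem : t ∈ ((H i b * w b : LaurentPolynomial 𝔽)).coeff.support :=
        Finsupp.mem_support_iff.2 hb
      have hmem2 := AddMonoidAlgebra.support_coeff_mul_subset (H i b) (w b) hmem
      rw [Finset.mem_add] at hmem2
      obtain ⟨x, hx, y, hy, hxy⟩ := hmem2
      refine ⟨b, y, ?_, Finsupp.mem_support_iff.1 hy⟩
      have : x.natAbs ≤ D := hbound i b x (Finsupp.mem_support_iff.1 hx)
      omega
    refine ⟨2 * D + 1, fun v v' hsep hsum => ?_⟩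
    rw [hH] at hsum ⊢
    rw [Set.mem_setOf_eq, Matrix.mulVec_add] at hsum
    have hv0 : H.mulVec v = 0 := by
      by_contra hne
      have hex : ∃ (i : Fin r) (t : ℤ), (H.mulVec v i).coeff t ≠ 0 := by
        by_contra hcon
        push_neg at hcon
        exact hne (funext fun i => AddMonoidAlgebra.ext (Finsupp.ext fun t => hcon i t))
      obtain ⟨i, t, ht⟩ := hex
      obtain ⟨b, s, hsD, hbs⟩ := key v i t ht
      have ht' : (H.mulVec v' i).coeff t ≠ 0 := by
        intro h0
        have hfi := congrFun hsum i
        rw [Pi.add_apply, Pi.zero_apply] at hfi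
        have h1 : ((H.mulVec v i + H.mulVec v' i : LaurentPolynomial 𝔽)).coeff t = 0 := by
          rw [hfi]; rfl
        rw [AddMonoidAlgebra.coeff_add, Finsupp.add_apply, h0, add_zero] at h1
        exact ht h1
      obtain ⟨b', s', hsD', hbs'⟩ := key v' i t ht'
      have hge := hsep s s' ⟨b, hbs⟩ ⟨b', hbs'⟩
      rw [Int.abs_eq_natAbs] at hge
      have hge2 : ((2 * D + 1 : ℕ) : ℤ) ≤ ((s' - s).natAbs : ℤ) := hge
      omega
    have hv'0 : H.mulVec v' = 0 := by
      rw [hv0, zero_add] at hsum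
      exact hsum
    exact ⟨hv0, hv'0⟩
  tfae_have 1 → 2 := by
    intro h1
    by_contra hnp
    set S : Submodule (LaurentPolynomial 𝔽) (Fin n → (LaurentPolynomial 𝔽)) :=
      LinearMap.range (Matrix.mulVecLin G) with hS
    have hCS : C = ↑S := by
      rw [hC, ← Matrix.coe_mulVecLin]
      exact (LinearMap.coe_range _).symm
    have hinj : Function.Injective (Matrix.mulVecLin G) := by
      rw [← LinearMap.ker_eq_bot, Matrix.ker_mulVecLin_eq_bot_iff]
      replace hG := Fintype.linearIndependent_iff.1 hG
      intro v hv
      have h0 : ∑ j, v j • Gᵀ j = 0 := by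
        funext i
        have h := congrFun hv i
        simpa [Matrix.mulVec, dotProduct, Finset.sum_apply, Matrix.transpose_apply,
          mul_comm] using h
      funext j
      exact hG v h0 j
    obtain ⟨k', snf⟩ := Submodule.smithNormalForm (Pi.basisFun (LaurentPolynomial 𝔽) (Fin n)) S
    have hunit : ¬ ∀ i, IsUnit (snf.a i) := by
      intro hall
      apply hnp
      set g : Fin n → S := fun j =>
        if h : ∃ i, snf.f i = j then (hall h.choose).unit⁻¹ • snf.bN h.choose else 0 with hg
      set proj : (Fin n → (LaurentPolynomial 𝔽)) →ₗ[(LaurentPolynomial 𝔽)] S :=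
        snf.bM.constr (LaurentPolynomial 𝔽) g with hproj
      have hprojS : ∀ x : S, proj ↑x = x := by
        have heq : proj ∘ₗ S.subtype = LinearMap.id := by
          refine snf.bN.ext fun i => ?_
          have h1 : (S.subtype (snf.bN i)) = snf.a i • snf.bM (snf.f i) := snf.snf i
          rw [LinearMap.comp_apply, h1, LinearMap.id_apply, _root_.map_smul, hproj,
            Module.Basis.constr_basis, hg]
          have hex : ∃ i', snf.f i' = snf.f i := ⟨i, rfl⟩
          simp only [dif_pos hex]
          have hchoose : hex.choose = i := snf.f.injective hex.choose_spec
          simp only [hchoose]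
          have huu : ∀ (c : LaurentPolynomial 𝔽) (hc : IsUnit c) (x : S),
              c • ((hc.unit⁻¹ : (LaurentPolynomial 𝔽)ˣ) • x) = x := by
            intro c hc x
            have hz := smul_inv_smul hc.unit x
            rwa [Units.smul_def, hc.unit_spec] at hz
          exact huu _ (hall i) _
        intro x
        have := congrFun (congrArg DFunLike.coe heq) x
        simpa using this
      set e : (Fin k → (LaurentPolynomial 𝔽)) ≃ₗ[(LaurentPolynomial 𝔽)] S :=
        LinearEquiv.ofInjective (Matrix.mulVecLin G) hinj with he
      set L' : (Fin n → (LaurentPolynomial 𝔽)) →ₗ[(LaurentPolynomial 𝔽)]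
          (Fin k → (LaurentPolynomial 𝔽)) := e.symm.toLinearMap ∘ₗ proj with hL'
      have hLG : L' ∘ₗ Matrix.mulVecLin G = LinearMap.id := by
        refine LinearMap.ext fun x => ?_
        have hx : Matrix.mulVecLin G x ∈ S := ⟨x, rfl⟩
        have h2 : proj (Matrix.mulVecLin G x) = e x := by
          have h3 : proj (Matrix.mulVecLin G x) = (⟨Matrix.mulVecLin G x, hx⟩ : S) :=
            hprojS ⟨Matrix.mulVecLin G x, hx⟩
          rw [h3]
          exact Subtype.ext (LinearEquiv.ofInjective_apply _ _).symm
        show e.symm (proj (Matrix.mulVecLin G x)) = x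
        rw [h2]
        exact e.symm_apply_apply x
      refine ⟨LinearMap.toMatrix' L', ?_⟩
      apply Matrix.toLin'.injective
      rw [Matrix.toLin'_mul, Matrix.toLin'_toMatrix', Matrix.toLin'_one]
      rw [Matrix.toLin'_apply']
      exact hLG
    push_neg at hunit
    obtain ⟨i0, hi0⟩ := hunit
    set q : (LaurentPolynomial 𝔽) := snf.a i0 with hq
    set u : Fin n → (LaurentPolynomial 𝔽) := snf.bM (snf.f i0) with hu
    have hq0 : q ≠ 0 := by
      intro h0
      have h1 : ((snf.bN i0 : S) : Fin n → (LaurentPolynomial 𝔽)) = q • u := snf.snf i0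
      rw [h0, zero_smul] at h1
      exact snf.bN.ne_zero i0 (by exact_mod_cast Subtype.ext h1)
    have hqu : q • u ∈ S := by
      rw [← snf.snf i0]
      exact (snf.bN i0).2
    have huS : u ∉ (S : Set (Fin n → (LaurentPolynomial 𝔽))) := by
      intro huS
      set c : Fin k' → (LaurentPolynomial 𝔽) := fun j => snf.bN.repr ⟨u, huS⟩ j with hc
      have hval : u = ∑ j, (c j * snf.a j) • snf.bM (snf.f j) := by
        have hexp : (⟨u, huS⟩ : S) = ∑ j, c j • snf.bN j := (snf.bN.sum_repr _).symm
        have := congrArg (S.subtype) hexp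
        simpa [_root_.map_sum, snf.snf, smul_smul] using this
      have h2 : (snf.bM.repr u) (snf.f i0) =
          ∑ j, (c j * snf.a j) * (if snf.f j = snf.f i0 then 1 else 0) := by
        conv_lhs => rw [hval]
        rw [_root_.map_sum, Finsupp.finset_sum_apply]
        refine Finset.sum_congr rfl fun j _ => ?_
        rw [_root_.map_smul, Finsupp.smul_apply, Module.Basis.repr_self, Finsupp.single_apply, smul_eq_mul]
      simp only [snf.f.injective.eq_iff, mul_ite, mul_one, mul_zero] at h2
      rw [Finset.sum_ite_eq' Finset.univ i0 (fun j => c j * snf.a j)] at h2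
      simp only [Finset.mem_univ, if_true] at h2
      have h3 : (snf.bM.repr u) (snf.f i0) = 1 := by
        rw [hu, Module.Basis.repr_self, Finsupp.single_apply, if_pos rfl]
      exact hi0 (IsUnit.of_mul_eq_one (c i0) (by rw [mul_comm, ← h2, h3]))
    obtain ⟨N, hN⟩ := h1
    obtain ⟨m, hm, hdvd⟩ := exists_T_pow_sub_one_dvd q hq0
    set B : ℕ := Finset.univ.sup (fun a : Fin n => (u a).coeff.support.sup Int.natAbs) with hB
    have hBB : ∀ (a : Fin n) (s : ℤ), (u a).coeff s ≠ 0 → s.natAbs ≤ B := by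
      intro a s hs
      calc s.natAbs ≤ (u a).coeff.support.sup Int.natAbs :=
            Finset.le_sup (Finsupp.mem_support_iff.2 hs)
        _ ≤ B := Finset.le_sup (f := fun a : Fin n => (u a).coeff.support.sup Int.natAbs)
            (Finset.mem_univ a)
    set M : ℕ := m * (N + 2 * B + 1) with hM
    have hMge : N + 2 * B + 1 ≤ M := by
      rw [hM]; nlinarith [hm]
    have hdvdM : q ∣ LaurentPolynomial.T (M : ℤ) - 1 := by
      have h4 := sub_dvd_pow_sub_pow (LaurentPolynomial.T ((m : ℕ) : ℤ) : LaurentPolynomial 𝔽) 1 (N + 2 * B + 1)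
      rw [one_pow, LaurentPolynomial.T_pow] at h4
      refine hdvd.trans ?_
      have h5 : (((N + 2 * B + 1 : ℕ) : ℤ) * ((m : ℕ) : ℤ)) = ((M : ℕ) : ℤ) := by
        rw [hM]; push_cast; ring
      rwa [h5] at h4
    set v : Fin n → (LaurentPolynomial 𝔽) := (LaurentPolynomial.T (M : ℤ) : LaurentPolynomial 𝔽) • u with hv
    set v' : Fin n → (LaurentPolynomial 𝔽) := -u with hv'
    have hsumC : v + v' ∈ C := by
      obtain ⟨c, hcEq⟩ := hdvdM
      have heq : v + v' = c • (q • u) := by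
        rw [hv, hv']
        funext a
        simp only [Pi.add_apply, Pi.neg_apply, Pi.smul_apply, smul_eq_mul]
        linear_combination (u a) * hcEq
      rw [hCS, heq]
      exact Submodule.smul_mem S c hqu
    have hsep : ∀ s t : ℤ, (∃ a, (v a).coeff s ≠ 0) → (∃ a, (v' a).coeff t ≠ 0) → (N : ℤ) ≤ |t - s| := by
      rintro s t ⟨a, has⟩ ⟨a', hat⟩
      rw [hv] at has
      simp only [Pi.smul_apply, smul_eq_mul] at has
      have h5 : s ∈ ((LaurentPolynomial.T (M : ℤ) * u a : LaurentPolynomial 𝔽)).coeff.support :=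
        Finsupp.mem_support_iff.2 has
      have h6 := AddMonoidAlgebra.support_coeff_mul_subset (LaurentPolynomial.T (M : ℤ)) (u a) h5
      rw [Finset.mem_add] at h6
      obtain ⟨x, hx, y, hy, hxy⟩ := h6
      have hxM : x = (M : ℤ) := by
        have := Finsupp.support_single_subset hx
        simpa using this
      have hyB : y.natAbs ≤ B := hBB a y (Finsupp.mem_support_iff.1 hy)
      rw [hv'] at hat
      simp only [Pi.neg_apply] at hat
      have htB : t.natAbs ≤ B := by
        refine hBB a' t ?_
        intro h0
        apply hat
        rw [AddMonoidAlgebra.coeff_neg, Finsupp.neg_apply, h0, neg_zero]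
      rw [Int.abs_eq_natAbs]
      omega
    have hres := hN v v' hsep hsumC
    apply huS
    have h7 : v' ∈ (S : Set (Fin n → (LaurentPolynomial 𝔽))) := by rw [← hCS]; exact hres.2
    have h8 : -u ∈ S := h7
    simpa using S.neg_mem h8
  tfae_finish
end

section
/- Let P(z) be an r×n matrix over 𝔽[z] of rank r, let B = ker P(σ) ⊆ (𝔽^n)^{ℤ_+} be its kernel behavior on the positive time axis, let δ be the McMillan degree of B, and set k = n − r. Then there exist constant matrices G, F ∈ 𝔽^{δ×(δ+k)} and H ∈ 𝔽^{n×(δ+k)} such that B = { w ∈ (𝔽^n)^{ℤ_+} : there exists ζ ∈ (𝔽^{δ+k})^{ℤ_+} with Gζ_{t+1} = Fζ_t and w_t = Hζ_t for all t ≥ 0 }, and moreover: (i) G has full row rank; (ii) the (δ+n)×(δ+k) stacked matrix [G; H] has full column rank; (iii) the (δ+n)×(δ+k) polynomial matrix [zG − F; H] is right prime over 𝔽[z]. -/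
open Matrix

section Helpers
variable {R : Type} [CommRing R]

lemma sum_ind_mul {ι : Type} [Fintype ι] [DecidableEq ι] (c₀ : ι) (v : ι → R) :
    ∑ c, (if c = c₀ then (1:R) else 0) * v c = v c₀ := by
  rw [Finset.sum_eq_single c₀] <;> simp +contextual

lemma matrix_ext_of_mulVec {m l : Type} [Fintype l] [DecidableEq l] {A B : Matrix m l R}
    (h : ∀ v, A.mulVec v = B.mulVec v) : A = B := by
  ext i j
  have := congrFun (h (Pi.single j 1)) i
  simpa [Matrix.mulVec_single] using this

lemma eq_one_of_mulVec {m l : Type} [Fintype m] [Fintype l] [DecidableEq l] [DecidableEq m]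
    {A : Matrix l m R} {B : Matrix m l R}
    (h : ∀ v, A.mulVec (B.mulVec v) = v) : A * B = 1 := by
  apply matrix_ext_of_mulVec
  intro v
  rw [← Matrix.mulVec_mulVec, h, Matrix.one_mulVec]

end Helpers

section Op
open Polynomial
variable {𝔽 : Type} [Field 𝔽]

/-- left shift as linear endomorphism of one-sided sequences -/
def shl (𝔽 : Type) [Field 𝔽] : Module.End 𝔽 (ℕ → 𝔽) where
  toFun w := fun t => w (t+1)
  map_add' _ _ := rfl
  map_smul' _ _ := rfl

lemma shl_pow (i : ℕ) (w : ℕ → 𝔽) (t : ℕ) : ((shl 𝔽 ^ i) w) t = w (t + i) := by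
  induction i generalizing w t with
  | zero => rfl
  | succ i ih =>
    rw [pow_succ]
    show ((shl 𝔽 ^ i) ((shl 𝔽) w)) t = _
    rw [ih]
    show w (t + i + 1) = _
    rw [add_assoc]

lemma aeval_shl_apply (p : 𝔽[X]) (w : ℕ → 𝔽) (t : ℕ) :
    (Polynomial.aeval (shl 𝔽) p) w t = p.sum fun i c => c * w (t + i) := by
  induction p using Polynomial.induction_on' with
  | add p q hp hq =>
    rw [map_add, Polynomial.sum_add_index p q (fun i c => c * w (t + i)) (fun i => zero_mul _)
      (fun a b₁ b₂ => add_mul _ _ _)]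
    show (aeval (shl 𝔽) p) w t + (aeval (shl 𝔽) q) w t = _
    rw [hp, hq]
  | monomial i c =>
    rw [Polynomial.aeval_monomial, Polynomial.sum_monomial_index c (fun i c => c * w (t + i)) (zero_mul _)]
    show ((algebraMap 𝔽 (Module.End 𝔽 (ℕ → 𝔽)) c) * (shl 𝔽)^i) w t = _
    rw [Module.End.mul_apply, Module.algebraMap_end_apply]
    show c * ((shl 𝔽 ^ i) w) t = _
    rw [shl_pow]

/-- matrix polynomial operator -/
noncomputable def opM {a b : ℕ} (P : Matrix (Fin a) (Fin b) (Polynomial 𝔽))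
    (w : ℕ → Fin b → 𝔽) : ℕ → Fin a → 𝔽 :=
  fun t i => ∑ j, (Polynomial.aeval (shl 𝔽) (P i j)) (fun s => w s j) t

lemma pSigmaPlus_eq_opM {a b : ℕ} (P : Matrix (Fin a) (Fin b) (Polynomial 𝔽))
    (w : ℕ → Fin b → 𝔽) : pSigmaPlus P w = opM P w := by
  funext t i
  simp only [pSigmaPlus, opM, aeval_shl_apply]

lemma opM_mul {a b c : ℕ} (U : Matrix (Fin a) (Fin b) (Polynomial 𝔽))
    (P : Matrix (Fin b) (Fin c) (Polynomial 𝔽)) (w : ℕ → Fin c → 𝔽) :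
    opM (U * P) w = opM U (opM P w) := by
  funext t i
  simp only [opM, Matrix.mul_apply, map_sum, _root_.map_mul, Module.End.mul_apply,
    LinearMap.coe_sum, Finset.sum_apply]
  rw [Finset.sum_comm]
  refine Finset.sum_congr rfl fun j _ => ?_
  have h1 : (fun s => ∑ j2 : Fin c, (aeval (shl 𝔽) (P j j2)) (fun s' => w s' j2) s)
      = ∑ j2 : Fin c, (aeval (shl 𝔽) (P j j2)) (fun s' => w s' j2) :=
    funext fun s => (Finset.sum_apply _ _ _).symm
  rw [h1, map_sum, Finset.sum_apply]

lemma opM_zero {a b : ℕ} (P : Matrix (Fin a) (Fin b) (Polynomial 𝔽)) :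
    opM P (0 : ℕ → Fin b → 𝔽) = 0 := by
  funext t i
  show (∑ j, (Polynomial.aeval (shl 𝔽) (P i j)) (0 : ℕ → 𝔽) t) = 0
  refine Finset.sum_eq_zero fun j _ => ?_
  rw [LinearMap.map_zero]
  rfl

lemma opM_one {a : ℕ} (w : ℕ → Fin a → 𝔽) :
    opM (1 : Matrix (Fin a) (Fin a) (Polynomial 𝔽)) w = w := by
  funext t i
  simp only [opM, Matrix.one_apply]
  rw [Finset.sum_eq_single i]
  · rw [if_pos rfl, _root_.map_one]; rfl
  · intro x _ hx
    rw [if_neg (Ne.symm hx), map_zero]; rfl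
  · intro h; exact absurd (Finset.mem_univ i) h
end Op

section Ind
variable {A : Type} [CommRing A] {r k : ℕ} (ν : Fin r → ℕ)

/-- index type for the state part -/
abbrev TIx (ν : Fin r → ℕ) : Type := Σ i : Fin r, Fin (ν i)

def gmat : Matrix (TIx ν) (TIx ν ⊕ Fin k) A := fun p c => if c = Sum.inl p then 1 else 0

def amat : Matrix (TIx ν) (TIx ν ⊕ Fin k) A := fun p c =>
  if 0 < p.2.val then
    (if c = Sum.inl ⟨p.1, ⟨p.2.val - 1, lt_of_le_of_lt (Nat.sub_le _ _) p.2.isLt⟩⟩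
      then 1 else 0)
  else 0

def emat : Matrix (Fin r) (TIx ν ⊕ Fin k) A := fun i c =>
  if h : 0 < ν i then
    (if c = Sum.inl ⟨i, ⟨ν i - 1, Nat.sub_lt h Nat.one_pos⟩⟩ then 1 else 0)
  else 0

def vmat : Matrix (Fin k) (TIx ν ⊕ Fin k) A := fun j c => if c = Sum.inr j then 1 else 0

variable (ζ : TIx ν ⊕ Fin k → A)

lemma gmat_mulVec (p : TIx ν) : (gmat (k := k) ν).mulVec ζ p = ζ (Sum.inl p) := by
  simp only [Matrix.mulVec, dotProduct, gmat]
  exact sum_ind_mul _ ζ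

lemma amat_mulVec_pos (p : TIx ν) (h : 0 < p.2.val) :
    (amat (k := k) ν).mulVec ζ p
      = ζ (Sum.inl ⟨p.1, ⟨p.2.val - 1, lt_of_le_of_lt (Nat.sub_le _ _) p.2.isLt⟩⟩) := by
  simp only [Matrix.mulVec, dotProduct, amat, if_pos h]
  exact sum_ind_mul _ ζ

lemma amat_mulVec_zero (p : TIx ν) (h : ¬ 0 < p.2.val) :
    (amat (k := k) ν).mulVec ζ p = 0 := by
  simp [Matrix.mulVec, dotProduct, amat, h]

lemma emat_mulVec_pos (i : Fin r) (h : 0 < ν i) :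
    (emat (k := k) ν).mulVec ζ i = ζ (Sum.inl ⟨i, ⟨ν i - 1, Nat.sub_lt h Nat.one_pos⟩⟩) := by
  simp only [Matrix.mulVec, dotProduct, emat, dif_pos h]
  exact sum_ind_mul _ ζ

lemma emat_mulVec_zero (i : Fin r) (h : ¬ 0 < ν i) :
    (emat (k := k) ν).mulVec ζ i = 0 := by
  simp [Matrix.mulVec, dotProduct, emat, h]

lemma vmat_mulVec (j : Fin k) : (vmat (k := k) ν).mulVec ζ j = ζ (Sum.inr j) := by
  simp only [Matrix.mulVec, dotProduct, vmat]
  exact sum_ind_mul _ ζ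

variable {B : Type} [CommRing B] (f : A →+* B)

lemma gmat_map : (gmat (k := k) ν (A := A)).map f = gmat ν := by
  ext p c; simp [gmat, Matrix.map_apply, apply_ite f]

lemma amat_map : (amat (k := k) ν (A := A)).map f = amat ν := by
  ext p c; simp [amat, Matrix.map_apply, apply_ite f]

lemma emat_map : (emat (k := k) ν (A := A)).map f = emat ν := by
  ext i c; simp [emat, Matrix.map_apply, apply_dite f, apply_ite f]

lemma vmat_map : (vmat (k := k) ν (A := A)).map f = vmat ν := by
  ext j c; simp [vmat, Matrix.map_apply, apply_ite f]

end Ind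

section Core
open Polynomial
variable {𝔽 : Type} [Field 𝔽] {r n : ℕ} (R : Matrix (Fin r) (Fin n) (Polynomial 𝔽))

/-- leading row coefficient matrix -/
def lam : Matrix (Fin r) (Fin n) 𝔽 := Matrix.of fun i j => (R i j).coeff (rowDeg R i)

lemma hdeg (i : Fin r) (b : Fin n) : (R i b).natDegree ≤ rowDeg R i := by
  unfold rowDeg
  exact Finset.le_sup (f := fun j => (R i j).natDegree) (Finset.mem_univ b)

/-- partial-sum state functions -/
def xw (w : ℕ → Fin n → 𝔽) (i : Fin r) (s t : ℕ) : 𝔽 :=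
  ∑ q ∈ Finset.range (rowDeg R i - s), ∑ b, (R i b).coeff (s + 1 + q) * w (t + q) b

lemma psum (w : ℕ → Fin n → 𝔽) (t : ℕ) (i : Fin r) :
    pSigmaPlus R w t i
      = ∑ b, ∑ m ∈ Finset.range (rowDeg R i + 1), (R i b).coeff m * w (t + m) b := by
  simp only [pSigmaPlus]
  refine Finset.sum_congr rfl fun b _ => ?_
  exact Polynomial.sum_over_range' _ (f := fun m c => c * w (t + m) b)
    (fun m => zero_mul _) _ (Nat.lt_succ_of_le (hdeg R i b))

lemma xw_step (w : ℕ → Fin n → 𝔽) (i : Fin r) (s t : ℕ) :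
    xw R w i s t = xw R w i (s+1) (t+1) + ∑ b, (R i b).coeff (s+1) * w t b := by
  rcases Nat.lt_or_ge s (rowDeg R i) with h | h
  · have h2 : rowDeg R i - s = (rowDeg R i - (s+1)) + 1 := by omega
    rw [xw, h2, Finset.sum_range_succ']
    refine congrArg₂ (· + ·) ?_ ?_
    · rw [xw]
      refine Finset.sum_congr rfl fun q _ => Finset.sum_congr rfl fun b _ => ?_
      have e2 : t + (q + 1) = t + 1 + q := by omega
      rw [e2]
      have e1 : s + 1 + (q + 1) = s + 1 + 1 + q := by omega
      rw [e1]
    · refine Finset.sum_congr rfl fun b _ => ?_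
      rw [add_zero, add_zero]
  · have h1 : rowDeg R i - s = 0 := by omega
    have h2 : rowDeg R i - (s+1) = 0 := by omega
    rw [xw, xw, h1, h2]
    simp only [Finset.range_zero, Finset.sum_empty, zero_add]
    symm
    refine Finset.sum_eq_zero fun b _ => ?_
    rw [Polynomial.coeff_eq_zero_of_natDegree_lt (lt_of_le_of_lt (hdeg R i b) (by omega)),
      zero_mul]

lemma xw_zero (w : ℕ → Fin n → 𝔽) (t : ℕ) (i : Fin r) :
    pSigmaPlus R w t i = (∑ b, (R i b).coeff 0 * w t b) + xw R w i 0 (t+1) := by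
  rw [psum, Finset.sum_comm, Finset.sum_range_succ', add_comm]
  refine congrArg₂ (· + ·) ?_ ?_
  · refine Finset.sum_congr rfl fun b _ => ?_
    rw [add_zero]
  · rw [xw]
    simp only [Nat.sub_zero]
    refine Finset.sum_congr rfl fun q _ => Finset.sum_congr rfl fun b _ => ?_
    have e2 : t + (q + 1) = t + 1 + q := by omega
    rw [e2]
    have e1 : q + 1 = 0 + 1 + q := by omega
    rw [e1]

lemma xw_top (w : ℕ → Fin n → 𝔽) (t : ℕ) (i : Fin r) (h : 0 < rowDeg R i) :
    xw R w i (rowDeg R i - 1) t = ∑ b, lam R i b * w t b := by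
  rw [xw]
  have h1 : rowDeg R i - (rowDeg R i - 1) = 1 := by omega
  rw [h1, Finset.sum_range_one]
  refine Finset.sum_congr rfl fun b _ => ?_
  have h2 : rowDeg R i - 1 + 1 + 0 = rowDeg R i := by omega
  rw [h2, add_zero]
  rfl

end Core

section Core2
open Polynomial
variable {𝔽 : Type} [Field 𝔽] {r n : ℕ}

lemma elim_dot {A : Type} [CommRing A] {α β : Type} [Fintype α] [Fintype β]
    (f : α → A) (g : β → A) (y : α ⊕ β → A) :
    ∑ m, Sum.elim f g m * y m = (∑ a, f a * y (Sum.inl a)) + ∑ b, g b * y (Sum.inr b) := by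
  rw [Fintype.sum_sum_type]
  simp

/-- complement data for a full-row-rank constant matrix -/
lemma exists_TKM (Λ : Matrix (Fin r) (Fin n) 𝔽) (hΛ : Λ.rank = r) :
    r ≤ n ∧ ∃ (T : Matrix (Fin n) (Fin r) 𝔽) (K : Matrix (Fin n) (Fin (n - r)) 𝔽)
      (M : Matrix (Fin (n - r)) (Fin n) 𝔽),
      (∀ y, Λ.mulVec (T.mulVec y) = y) ∧
      (∀ v, Λ.mulVec (K.mulVec v) = 0) ∧
      (∀ v, M.mulVec (K.mulVec v) = v) ∧
      (∀ y, M.mulVec (T.mulVec y) = 0) ∧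
      (∀ w, T.mulVec (Λ.mulVec w) + K.mulVec (M.mulVec w) = w) := by
  classical
  have hrange : Module.finrank 𝔽 (LinearMap.range Λ.mulVecLin) = r := hΛ
  have hsurj : Function.Surjective Λ.mulVecLin := by
    rw [← LinearMap.range_eq_top]
    apply Submodule.eq_top_of_finrank_eq
    rw [hrange, Module.finrank_pi, Fintype.card_fin]
  obtain ⟨g, hg⟩ := LinearMap.exists_rightInverse_of_surjective Λ.mulVecLin
    (LinearMap.range_eq_top.mpr hsurj)
  have hg' : ∀ y, Λ.mulVec (g y) = y := by
    intro y
    have := DFunLike.congr_fun hg y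
    simpa [Matrix.mulVecLin_apply] using this
  have hfin := LinearMap.finrank_range_add_finrank_ker Λ.mulVecLin
  have hpin : Module.finrank 𝔽 (Fin n → 𝔽) = n := by
    rw [Module.finrank_pi, Fintype.card_fin]
  rw [hpin, hrange] at hfin
  have hrn : r ≤ n := by omega
  have hker : Module.finrank 𝔽 (LinearMap.ker Λ.mulVecLin) = n - r := by omega
  refine ⟨hrn, ?_⟩
  set κ : Module.Basis (Fin (n - r)) 𝔽 (LinearMap.ker Λ.mulVecLin) :=
    (Module.finBasis 𝔽 (LinearMap.ker Λ.mulVecLin)).reindex (finCongr hker) with hκdef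
  set T : Matrix (Fin n) (Fin r) 𝔽 := LinearMap.toMatrix' g with hTdef
  have hT : ∀ y, T.mulVec y = g y := by
    intro y
    rw [← Matrix.toLin'_apply, hTdef, Matrix.toLin'_toMatrix']
  set K : Matrix (Fin n) (Fin (n - r)) 𝔽 := Matrix.of fun a j => (κ j : Fin n → 𝔽) a with hKdef
  have hKsum : ∀ v : Fin (n - r) → 𝔽,
      K.mulVec v = ((∑ j, v j • κ j : LinearMap.ker Λ.mulVecLin) : Fin n → 𝔽) := by
    intro v
    funext a
    simp only [Matrix.mulVec, dotProduct, hKdef, Matrix.of_apply]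
    rw [AddSubmonoidClass.coe_finset_sum, Finset.sum_apply]
    refine Finset.sum_congr rfl fun j _ => ?_
    simp [mul_comm]
  have hkermem : ∀ x : LinearMap.ker Λ.mulVecLin, Λ.mulVec (x : Fin n → 𝔽) = 0 := by
    intro x
    have := x.2
    rw [LinearMap.mem_ker] at this
    rw [← Matrix.mulVecLin_apply]
    exact this
  have hLK : ∀ v, Λ.mulVec (K.mulVec v) = 0 := by
    intro v; rw [hKsum]; exact hkermem _
  have hπmem : ∀ w : Fin n → 𝔽,
      ((LinearMap.id : (Fin n → 𝔽) →ₗ[𝔽] (Fin n → 𝔽)) - g ∘ₗ Λ.mulVecLin) w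
        ∈ LinearMap.ker Λ.mulVecLin := by
    intro w
    rw [LinearMap.mem_ker]
    simp [LinearMap.sub_apply, LinearMap.comp_apply, Matrix.mulVecLin_apply, map_sub, hg']
  set πlin := LinearMap.codRestrict (LinearMap.ker Λ.mulVecLin) _ hπmem with hπdef
  have hπ : ∀ w, (πlin w : Fin n → 𝔽) = w - g (Λ.mulVec w) := by
    intro w
    rw [hπdef, LinearMap.codRestrict_apply]
    simp [LinearMap.sub_apply, LinearMap.comp_apply, Matrix.mulVecLin_apply]
  set Mlin : (Fin n → 𝔽) →ₗ[𝔽] (Fin (n - r) → 𝔽) := κ.equivFun.toLinearMap ∘ₗ πlin with hMdef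
  set M : Matrix (Fin (n - r)) (Fin n) 𝔽 := LinearMap.toMatrix' Mlin with hMmatdef
  have hM : ∀ w, M.mulVec w = Mlin w := by
    intro w
    rw [← Matrix.toLin'_apply, hMmatdef, Matrix.toLin'_toMatrix']
  refine ⟨T, K, M, ?_, hLK, ?_, ?_, ?_⟩
  · intro y; rw [hT, hg']
  · -- M (K v) = v
    intro v
    rw [hM]
    have h1 : πlin (K.mulVec v) = ∑ j, v j • κ j := by
      apply Subtype.ext
      rw [hπ, hKsum]
      rw [show Λ.mulVec ((∑ j, v j • κ j : LinearMap.ker Λ.mulVecLin) : Fin n → 𝔽) = 0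
        from hkermem _]
      rw [map_zero, sub_zero]
    show κ.equivFun (πlin (K.mulVec v)) = v
    rw [h1]
    funext j
    rw [Module.Basis.equivFun_apply, Module.Basis.repr_sum_self]
  · -- M (T y) = 0
    intro y
    rw [hM, hT]
    have h1 : πlin (g y) = 0 := by
      apply Subtype.ext
      rw [hπ, hg']
      simp
    show κ.equivFun (πlin (g y)) = 0
    rw [h1]
    exact LinearEquiv.map_zero κ.equivFun
  · -- T Λ w + K M w = w
    intro w
    rw [hM]
    have h1 : K.mulVec (Mlin w) = (πlin w : Fin n → 𝔽) := by
      rw [hKsum]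
      congr 1
      show (∑ j, κ.equivFun (πlin w) j • κ j) = πlin w
      exact κ.sum_equivFun _
    rw [h1, hπ, hT]
    abel

end Core2

section Core3
open Polynomial
variable {𝔽 : Type} [Field 𝔽] {r n : ℕ}

theorem core_rep (R : Matrix (Fin r) (Fin n) (Polynomial 𝔽)) (hR : RowReduced R) :
    ∃ (G F₀ : Matrix (TIx (rowDeg R)) (TIx (rowDeg R) ⊕ Fin (n - r)) 𝔽)
      (H : Matrix (Fin n) (TIx (rowDeg R) ⊕ Fin (n - r)) 𝔽),
      ({w : ℕ → Fin n → 𝔽 | pSigmaPlus R w = 0}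
        = {w | ∃ ζ : ℕ → TIx (rowDeg R) ⊕ Fin (n - r) → 𝔽,
            ∀ t, G.mulVec (ζ (t+1)) = F₀.mulVec (ζ t) ∧ w t = H.mulVec (ζ t)}) ∧
      Function.Surjective G.mulVecLin ∧
      Function.Injective (Matrix.fromRows G H).mulVecLin ∧
      (∃ L : Matrix (TIx (rowDeg R) ⊕ Fin (n - r)) (TIx (rowDeg R) ⊕ Fin n) (Polynomial 𝔽),
        L * (Matrix.fromRows
        ((Polynomial.X : Polynomial 𝔽) • G.map Polynomial.C - F₀.map Polynomial.C)
        (H.map Polynomial.C)) = 1) := by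
  classical
  obtain ⟨hrn, T, K, M, hΛT, hΛK, hMK, hMT, hTKM⟩ := exists_TKM (lam R) hR
  -- constant matrices
  set G : Matrix (TIx (rowDeg R)) (TIx (rowDeg R) ⊕ Fin (n - r)) 𝔽 := gmat (rowDeg R) with hGdef
  set HD : Matrix (Fin n) (TIx (rowDeg R) ⊕ Fin (n - r)) 𝔽 := T * emat (rowDeg R) + K * vmat (rowDeg R) with hHDdef
  set W : Matrix (TIx (rowDeg R)) (Fin n) 𝔽 := Matrix.of (fun p b => (R p.1 b).coeff p.2.val) with hWdef
  set F₀ : Matrix (TIx (rowDeg R)) (TIx (rowDeg R) ⊕ Fin (n - r)) 𝔽 := amat (rowDeg R) - W * HD with hFdef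
  have hHD : ∀ ζ, HD.mulVec ζ
      = T.mulVec ((emat (rowDeg R)).mulVec ζ) + K.mulVec ((vmat (rowDeg R)).mulVec ζ) := by
    intro ζ
    rw [hHDdef, Matrix.add_mulVec, Matrix.mulVec_mulVec, Matrix.mulVec_mulVec]
    rfl
  have hΛH : lam R * HD = emat (rowDeg R) := by
    apply matrix_ext_of_mulVec
    intro v
    rw [← Matrix.mulVec_mulVec, hHD, Matrix.mulVec_add, hΛT, hΛK, add_zero]
  have hMH : M * HD = vmat (rowDeg R) := by
    apply matrix_ext_of_mulVec
    intro v
    rw [← Matrix.mulVec_mulVec, hHD, Matrix.mulVec_add, hMT, hMK, zero_add]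
  -- pointwise versions
  have hΛHv : ∀ ζ, (lam R).mulVec (HD.mulVec ζ) = (emat (rowDeg R)).mulVec ζ := by
    intro ζ; rw [Matrix.mulVec_mulVec, hΛH]
  have hMHv : ∀ ζ, M.mulVec (HD.mulVec ζ) = (vmat (rowDeg R)).mulVec ζ := by
    intro ζ; rw [Matrix.mulVec_mulVec, hMH]
  have hF₀v : ∀ ζ p, F₀.mulVec ζ p
      = (amat (rowDeg R)).mulVec ζ p - ∑ b, W p b * HD.mulVec ζ b := by
    intro ζ p
    rw [hFdef, Matrix.sub_mulVec, Pi.sub_apply, ← Matrix.mulVec_mulVec]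
    rfl
  refine ⟨G, F₀, HD, ?_, ?_, ?_, ?_⟩
  · -- behavior equality
    ext w
    simp only [Set.mem_setOf_eq]
    constructor
    · intro hw
      have hwt : ∀ t' (i : Fin r), pSigmaPlus R w t' i = 0 := by
        intro t' i; rw [hw]; rfl
      set ζ : ℕ → TIx (rowDeg R) ⊕ Fin (n - r) → 𝔽 :=
        fun t => Sum.elim (fun p => xw R w p.1 p.2.val t) (fun j => M.mulVec (w t) j) with hζdef
      have hE : ∀ t, (emat (rowDeg R)).mulVec (ζ t) = (lam R).mulVec (w t) := by
        intro t; funext i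
        by_cases h : 0 < rowDeg R i
        · rw [emat_mulVec_pos (rowDeg R) (ζ t) i h]
          show xw R w i (rowDeg R i - 1) t = _
          rw [xw_top R w t i h]
          rfl
        · rw [emat_mulVec_zero (rowDeg R) (ζ t) i h]
          have hν0 : rowDeg R i = 0 := by omega
          have h1 := hwt t i
          rw [psum] at h1
          symm
          calc (lam R).mulVec (w t) i = ∑ b, (R i b).coeff (rowDeg R i) * w t b := rfl
            _ = ∑ b, ∑ m ∈ Finset.range (rowDeg R i + 1), (R i b).coeff m * w (t+m) b := by
                refine Finset.sum_congr rfl fun b _ => ?_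
                rw [hν0]
                simp [Finset.sum_range_one]
            _ = 0 := h1
      have hwH : ∀ t, w t = HD.mulVec (ζ t) := by
        intro t
        rw [hHD, hE]
        have hv : (vmat (rowDeg R)).mulVec (ζ t) = M.mulVec (w t) := by
          funext j; rw [vmat_mulVec]; rfl
        rw [hv, hTKM]
      refine ⟨ζ, fun t => ⟨?_, hwH t⟩⟩
      funext p
      obtain ⟨i, s⟩ := p
      rw [hGdef, gmat_mulVec, hF₀v, ← hwH t]
      by_cases h : 0 < s.val
      · rw [amat_mulVec_pos (rowDeg R) (ζ t) ⟨i, s⟩ h]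
        simp only [hζdef, Sum.elim_inl]
        have hstep := xw_step R w i (s.val - 1) t
        have e2 : s.val - 1 + 1 = s.val := by omega
        rw [e2] at hstep
        rw [hstep]
        simp only [hWdef, Matrix.of_apply]
        ring
      · rw [amat_mulVec_zero (rowDeg R) (ζ t) ⟨i, s⟩ h]
        have hs0 : s.val = 0 := by omega
        have h2 : ∑ b, (R i b).coeff 0 * w t b + xw R w i 0 (t+1) = 0 := by
          rw [← xw_zero R w t i]; exact hwt t i
        simp only [hζdef, Sum.elim_inl, hWdef, Matrix.of_apply, hs0]
        rw [zero_sub]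
        have h2' : xw R w i 0 (t + 1) + ∑ b, (R i b).coeff 0 * w t b = 0 := by
          rw [add_comm]; exact h2
        exact eq_neg_of_add_eq_zero_left h2'
    · rintro ⟨ζ, hζ⟩
      have hwH : ∀ t, w t = HD.mulVec (ζ t) := fun t => (hζ t).2
      have hGF : ∀ t p, ζ (t+1) (Sum.inl p)
          = (amat (rowDeg R)).mulVec (ζ t) p - ∑ b, W p b * w t b := by
        intro t p
        have h1 := congrFun (hζ t).1 p
        rw [hGdef, gmat_mulVec] at h1
        rw [h1, hF₀v, ← hwH t]
      have hE : ∀ t, (emat (rowDeg R)).mulVec (ζ t) = (lam R).mulVec (w t) := by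
        intro t; rw [hwH t, hΛHv]
      have hkey : ∀ d (i : Fin r) (s : Fin (rowDeg R i)), s.val + d + 1 = rowDeg R i →
          ∀ t, ζ t (Sum.inl ⟨i, s⟩) = xw R w i s.val t := by
        intro d
        induction d with
        | zero =>
          intro i s hs t
          have hpos : 0 < rowDeg R i := by omega
          have h1 := congrFun (hE t) i
          rw [emat_mulVec_pos (rowDeg R) (ζ t) i hpos] at h1
          have hsval : s = (⟨rowDeg R i - 1, Nat.sub_lt hpos Nat.one_pos⟩ : Fin (rowDeg R i)) :=
            Fin.ext (show s.val = rowDeg R i - 1 from by omega)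
          rw [hsval, h1]
          show (lam R).mulVec (w t) i = xw R w i (rowDeg R i - 1) t
          rw [xw_top R w t i hpos]
          rfl
        | succ d ih =>
          intro i s hs t
          have hlt : s.val + 1 < rowDeg R i := by omega
          have h1 := hGF t ⟨i, ⟨s.val + 1, hlt⟩⟩
          rw [amat_mulVec_pos (rowDeg R) (ζ t) ⟨i, ⟨s.val + 1, hlt⟩⟩ (Nat.succ_pos s.val)] at h1
          have e1 : (⟨(⟨s.val + 1, hlt⟩ : Fin (rowDeg R i)).val - 1,
              lt_of_le_of_lt (Nat.sub_le _ _) (Fin.isLt _)⟩ : Fin (rowDeg R i)) = s :=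
            Fin.ext (by simp)
          simp only [e1] at h1
          have h2 := ih i ⟨s.val + 1, hlt⟩
            (show s.val + 1 + d + 1 = rowDeg R i from by omega) (t+1)
          have h4 : ζ t (Sum.inl ⟨i, s⟩)
              = ζ (t+1) (Sum.inl ⟨i, ⟨s.val + 1, hlt⟩⟩) + ∑ b, W ⟨i, ⟨s.val + 1, hlt⟩⟩ b * w t b := by
            rw [h1]; ring
          rw [h4, h2, xw_step R w i s.val t]
          simp only [hWdef, Matrix.of_apply]
      funext t i
      show pSigmaPlus R w t i = 0
      rw [xw_zero R w t i]
      by_cases hpos : 0 < rowDeg R i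
      · have h1 := hGF t ⟨i, ⟨0, hpos⟩⟩
        rw [amat_mulVec_zero (rowDeg R) (ζ t) ⟨i, ⟨0, hpos⟩⟩ (by simp)] at h1
        have h2 : ζ (t+1) (Sum.inl ⟨i, ⟨0, hpos⟩⟩) = xw R w i 0 (t+1) :=
          hkey (rowDeg R i - 1) i ⟨0, hpos⟩
            (show 0 + (rowDeg R i - 1) + 1 = rowDeg R i from by omega) (t+1)
        rw [h2] at h1
        have h1' : xw R w i 0 (t+1) = 0 - ∑ b, (R i b).coeff 0 * w t b := h1
        rw [h1']
        ring
      · have hν0 : rowDeg R i = 0 := by omega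
        have h1 := congrFun (hE t) i
        rw [emat_mulVec_zero (rowDeg R) (ζ t) i hpos] at h1
        have h2 : xw R w i 0 (t+1) = 0 := by
          simp [xw, hν0]
        rw [h2, add_zero]
        have h3 : (lam R).mulVec (w t) i = ∑ b, (R i b).coeff 0 * w t b := by
          show ∑ b, lam R i b * w t b = _
          refine Finset.sum_congr rfl fun b _ => ?_
          show (R i b).coeff (rowDeg R i) * w t b = _
          rw [hν0]
        rw [← h3, ← h1]
  · -- G surjective
    intro y
    refine ⟨Sum.elim y 0, ?_⟩
    funext p
    rw [Matrix.mulVecLin_apply, hGdef, gmat_mulVec]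
    rfl
  · -- fromRows injective
    have hzero : ∀ ζ, (Matrix.fromRows G HD).mulVec ζ = 0 → ζ = 0 := by
      intro ζ hζ
      rw [Matrix.fromRows_mulVec] at hζ
      have h1 : G.mulVec ζ = 0 := funext fun p => congrFun hζ (Sum.inl p)
      have h2 : HD.mulVec ζ = 0 := funext fun b => congrFun hζ (Sum.inr b)
      funext c
      rcases c with p | j
      · have := congrFun h1 p
        rwa [hGdef, gmat_mulVec] at this
      · have h3 := congrFun (hMHv ζ) j
        rw [h2] at h3
        rw [vmat_mulVec] at h3
        rw [← h3]
        simp [Matrix.mulVec_zero]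
    intro a b hab
    have h : a - b = 0 := by
      apply hzero
      rw [← Matrix.mulVecLin_apply, map_sub, hab, sub_self]
    exact sub_eq_zero.mp h
  · -- right prime
    set MatP := Matrix.fromRows
      ((Polynomial.X : Polynomial 𝔽) • G.map Polynomial.C - F₀.map Polynomial.C)
      (HD.map Polynomial.C) with hMatPdef
    have hFmapC : F₀.map (Polynomial.C : 𝔽 →+* Polynomial 𝔽)
        = amat (rowDeg R) - (W.map Polynomial.C) * (HD.map Polynomial.C) := by
      rw [hFdef, Matrix.map_sub _ (fun a b => map_sub Polynomial.C a b), Matrix.map_mul,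
        amat_map]
    have hy2 : ∀ (ζp : TIx (rowDeg R) ⊕ Fin (n - r) → Polynomial 𝔽) (b : Fin n),
        MatP.mulVec ζp (Sum.inr b)
          = (HD.map (Polynomial.C : 𝔽 →+* Polynomial 𝔽)).mulVec ζp b := by
      intro ζp b; rw [hMatPdef, Matrix.fromRows_mulVec]; rfl
    have hy1 : ∀ (ζp : TIx (rowDeg R) ⊕ Fin (n - r) → Polynomial 𝔽) (p : TIx (rowDeg R)),
        MatP.mulVec ζp (Sum.inl p)
          = Polynomial.X * ζp (Sum.inl p) - (amat (rowDeg R)).mulVec ζp p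
            + ∑ b, Polynomial.C (W p b)
                * (HD.map (Polynomial.C : 𝔽 →+* Polynomial 𝔽)).mulVec ζp b := by
      intro ζp p
      rw [hMatPdef, Matrix.fromRows_mulVec]
      show (((Polynomial.X : Polynomial 𝔽) • G.map Polynomial.C - F₀.map Polynomial.C).mulVec
        ζp) p = _
      rw [Matrix.sub_mulVec, Pi.sub_apply, Matrix.smul_mulVec, Pi.smul_apply,
        hGdef, gmat_map, gmat_mulVec, hFmapC, Matrix.sub_mulVec, Pi.sub_apply,
        ← Matrix.mulVec_mulVec]
      have hWC : (W.map (Polynomial.C : 𝔽 →+* Polynomial 𝔽)).mulVec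
          ((HD.map (Polynomial.C : 𝔽 →+* Polynomial 𝔽)).mulVec ζp) p
          = ∑ b, Polynomial.C (W p b)
              * (HD.map (Polynomial.C : 𝔽 →+* Polynomial 𝔽)).mulVec ζp b := rfl
      rw [hWC, smul_eq_mul]
      ring
    have hg1 : ∀ (ζp : TIx (rowDeg R) ⊕ Fin (n - r) → Polynomial 𝔽),
        ((lam R).map (Polynomial.C : 𝔽 →+* Polynomial 𝔽)).mulVec
          ((HD.map (Polynomial.C : 𝔽 →+* Polynomial 𝔽)).mulVec ζp)
          = (emat (rowDeg R)).mulVec ζp := by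
      intro ζp
      rw [Matrix.mulVec_mulVec, ← Matrix.map_mul, hΛH, emat_map]
    have hg2 : ∀ (ζp : TIx (rowDeg R) ⊕ Fin (n - r) → Polynomial 𝔽),
        (M.map (Polynomial.C : 𝔽 →+* Polynomial 𝔽)).mulVec
          ((HD.map (Polynomial.C : 𝔽 →+* Polynomial 𝔽)).mulVec ζp)
          = (vmat (rowDeg R)).mulVec ζp := by
      intro ζp
      rw [Matrix.mulVec_mulVec, ← Matrix.map_mul, hMH, vmat_map]
    have hrowv : ∀ (j : Fin (n - r)), ∃ row : TIx (rowDeg R) ⊕ Fin n → Polynomial 𝔽,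
        ∀ ζp, ∑ m, row m * MatP.mulVec ζp m = ζp (Sum.inr j) := by
      intro j
      refine ⟨Sum.elim 0 (fun b => Polynomial.C (M j b)), fun ζp => ?_⟩
      rw [elim_dot]
      simp only [Pi.zero_apply, zero_mul, Finset.sum_const_zero, zero_add]
      have h1 := congrFun (hg2 ζp) j
      rw [vmat_mulVec] at h1
      rw [← h1]
      refine Finset.sum_congr rfl fun b _ => ?_
      rw [hy2]
      rfl
    have hrowx : ∀ (i : Fin r) (d : ℕ) (s : Fin (rowDeg R i)), s.val + d + 1 = rowDeg R i →
        ∃ row : TIx (rowDeg R) ⊕ Fin n → Polynomial 𝔽,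
        ∀ ζp, ∑ m, row m * MatP.mulVec ζp m = ζp (Sum.inl ⟨i, s⟩) := by
      intro i d
      induction d with
      | zero =>
        intro s hs
        have hpos : 0 < rowDeg R i := by omega
        refine ⟨Sum.elim 0 (fun b => Polynomial.C (lam R i b)), fun ζp => ?_⟩
        rw [elim_dot]
        simp only [Pi.zero_apply, zero_mul, Finset.sum_const_zero, zero_add]
        have h1 := congrFun (hg1 ζp) i
        rw [emat_mulVec_pos (rowDeg R) ζp i hpos] at h1
        have e1 : (⟨rowDeg R i - 1, Nat.sub_lt hpos Nat.one_pos⟩ : Fin (rowDeg R i)) = s :=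
          Fin.ext (show rowDeg R i - 1 = s.val from by omega)
        rw [e1] at h1
        rw [← h1]
        refine Finset.sum_congr rfl fun b _ => ?_
        rw [hy2]
        rfl
      | succ d ih =>
        intro s hs
        have hlt : s.val + 1 < rowDeg R i := by omega
        obtain ⟨row', hrow'⟩ := ih ⟨s.val + 1, hlt⟩
          (show s.val + 1 + d + 1 = rowDeg R i from by omega)
        refine ⟨fun m => Polynomial.X * row' m
          + Sum.elim
              (fun q => if q = (⟨i, ⟨s.val + 1, hlt⟩⟩ : TIx (rowDeg R)) then -1 else 0)
              (fun b => Polynomial.C ((R i b).coeff (s.val + 1))) m, fun ζp => ?_⟩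
        simp only [add_mul]
        rw [Finset.sum_add_distrib]
        have h1 : ∑ m, Polynomial.X * row' m * MatP.mulVec ζp m
            = Polynomial.X * ζp (Sum.inl ⟨i, ⟨s.val + 1, hlt⟩⟩) := by
          rw [← hrow' ζp, Finset.mul_sum]
          exact Finset.sum_congr rfl fun m _ => by ring
        rw [h1, elim_dot]
        have h2 : ∑ q, (if q = (⟨i, ⟨s.val + 1, hlt⟩⟩ : TIx (rowDeg R))
              then (-1 : Polynomial 𝔽) else 0) * MatP.mulVec ζp (Sum.inl q)
            = - MatP.mulVec ζp (Sum.inl ⟨i, ⟨s.val + 1, hlt⟩⟩) := by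
          rw [Finset.sum_eq_single (⟨i, ⟨s.val + 1, hlt⟩⟩ : TIx (rowDeg R))]
          · rw [if_pos rfl]; ring
          · intro q _ hq; rw [if_neg hq, zero_mul]
          · intro h; exact absurd (Finset.mem_univ _) h
        rw [h2, hy1 ζp ⟨i, ⟨s.val + 1, hlt⟩⟩,
          amat_mulVec_pos (rowDeg R) ζp ⟨i, ⟨s.val + 1, hlt⟩⟩ (Nat.succ_pos s.val)]
        have e1 : (⟨(⟨s.val + 1, hlt⟩ : Fin (rowDeg R i)).val - 1,
            lt_of_le_of_lt (Nat.sub_le _ _) (Fin.isLt _)⟩ : Fin (rowDeg R i)) = s :=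
          Fin.ext (by simp)
        simp only [e1]
        have h3 : ∀ b, (Polynomial.C ((R i b).coeff (s.val + 1)) : Polynomial 𝔽)
            = Polynomial.C (W ⟨i, ⟨s.val + 1, hlt⟩⟩ b) := fun b => rfl
        simp only [h3]
        have h4 : ∀ b, MatP.mulVec ζp (Sum.inr b)
            = (HD.map (Polynomial.C : 𝔽 →+* Polynomial 𝔽)).mulVec ζp b := hy2 ζp
        simp only [h4]
        ring
    choose rowv hrowvs using hrowv
    choose rowx hrowxs using hrowx
    refine ⟨Matrix.of (fun c m => Sum.elim
      (fun p : TIx (rowDeg R) => rowx p.1 (rowDeg R p.1 - 1 - p.2.val) p.2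
        (by have := p.2.isLt; omega) m)
      (fun j => rowv j m) c), eq_one_of_mulVec fun v => ?_⟩
    funext c
    rcases c with p | j
    · obtain ⟨i, s⟩ := p
      exact hrowxs i (rowDeg R i - 1 - s.val) s (by have := s.isLt; omega) v
    · exact hrowvs j v

end Core3

section Final
open Polynomial
variable {𝔽 : Type} [Field 𝔽]

lemma rank_eq_card_of_surj {m l : Type} [Fintype m] [Fintype l] (A : Matrix m l 𝔽)
    (h : Function.Surjective A.mulVecLin) : A.rank = Fintype.card m := by
  rw [Matrix.rank, LinearMap.range_eq_top.mpr h, finrank_top, Module.finrank_pi]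

lemma rank_eq_card_of_inj {m l : Type} [Fintype m] [Fintype l] (A : Matrix m l 𝔽)
    (h : Function.Injective A.mulVecLin) : A.rank = Fintype.card l := by
  rw [Matrix.rank, LinearMap.finrank_range_of_inj h, Module.finrank_pi]

end Final

theorem first_order_representation_behavior'
    (𝔽 : Type) [Field 𝔽] [Fintype 𝔽] (r n : ℕ)
    (P : Matrix (Fin r) (Fin n) (Polynomial 𝔽))
    (hP : LinearIndependent (Polynomial 𝔽) P)
    (B : Set (ℕ → Fin n → 𝔽)) (hB : B = { w : ℕ → Fin n → 𝔽 | pSigmaPlus P w = 0 })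
    (U : Matrix (Fin r) (Fin r) (Polynomial 𝔽)) (hU : IsUnit U)
    (hUP : RowReduced (U * P))
    (δ : ℕ) (hδ : δ = ∑ i : Fin r, rowDeg (U * P) i) :
    ∃ (G F₀ : Matrix (Fin δ) (Fin (δ + (n - r))) 𝔽)
      (H : Matrix (Fin n) (Fin (δ + (n - r))) 𝔽),
      B = { w : ℕ → Fin n → 𝔽 | ∃ ζ : ℕ → Fin (δ + (n - r)) → 𝔽,
        ∀ t : ℕ, G.mulVec (ζ (t + 1)) = F₀.mulVec (ζ t) ∧ w t = H.mulVec (ζ t) } ∧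
      G.rank = δ ∧
      (Matrix.fromRows G H).rank = δ + (n - r) ∧
      RightPrime (Matrix.fromRows
        ((Polynomial.X : Polynomial 𝔽) • G.map (fun a => (Polynomial.C a : Polynomial 𝔽)) -
          F₀.map (fun a => (Polynomial.C a : Polynomial 𝔽)))
        (H.map (fun a => (Polynomial.C a : Polynomial 𝔽)))) := by
  classical
  -- replace B by the kernel of U * P
  have hBU : B = {w : ℕ → Fin n → 𝔽 | pSigmaPlus (U * P) w = 0} := by
    rw [hB]
    ext w
    simp only [Set.mem_setOf_eq]
    rw [pSigmaPlus_eq_opM, pSigmaPlus_eq_opM, opM_mul]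
    constructor
    · intro h; rw [h, opM_zero]
    · intro h
      obtain ⟨u, hu⟩ := hU
      subst hu
      have h2 := congrArg (opM (↑u⁻¹ : Matrix (Fin r) (Fin r) (Polynomial 𝔽))) h
      rw [← opM_mul, Units.inv_mul, opM_one, opM_zero] at h2
      exact h2
  obtain ⟨G0, F0, H0, hbeh, hGsurj, hinj, L0, hL0⟩ := core_rep (U * P) hUP
  have hcardT : Fintype.card (TIx (rowDeg (U * P))) = δ := by
    rw [hδ]
    simp [TIx]
  have hcardI : Fintype.card (TIx (rowDeg (U * P)) ⊕ Fin (n - r)) = δ + (n - r) := by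
    simp [hcardT]
  set e₁ : TIx (rowDeg (U * P)) ≃ Fin δ := Fintype.equivFinOfCardEq hcardT with he₁
  set e₂ : (TIx (rowDeg (U * P)) ⊕ Fin (n - r)) ≃ Fin (δ + (n - r)) :=
    Fintype.equivFinOfCardEq hcardI with he₂
  set G' := G0.submatrix ⇑e₁.symm ⇑e₂.symm with hG'
  set F' := F0.submatrix ⇑e₁.symm ⇑e₂.symm with hF'
  set H' := H0.submatrix (id : Fin n → Fin n) ⇑e₂.symm with hH'
  have hGv : ∀ v, G'.mulVec v = (G0.mulVec (v ∘ ⇑e₂)) ∘ ⇑e₁.symm := by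
    intro v
    rw [hG', Matrix.submatrix_mulVec_equiv]
    rfl
  have hFv : ∀ v, F'.mulVec v = (F0.mulVec (v ∘ ⇑e₂)) ∘ ⇑e₁.symm := by
    intro v
    rw [hF', Matrix.submatrix_mulVec_equiv]
    rfl
  have hHv : ∀ v, H'.mulVec v = H0.mulVec (v ∘ ⇑e₂) := by
    intro v
    rw [hH', Matrix.submatrix_mulVec_equiv]
    rfl
  refine ⟨G', F', H', ?_, ?_, ?_, ?_⟩
  · -- behavior
    rw [hBU, hbeh]
    ext w
    simp only [Set.mem_setOf_eq]
    constructor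
    · rintro ⟨ζ, hζ⟩
      refine ⟨fun t => ζ t ∘ ⇑e₂.symm, fun t => ⟨?_, ?_⟩⟩
      · rw [hGv, hFv]
        have hc : ∀ t', (ζ t' ∘ ⇑e₂.symm) ∘ ⇑e₂ = ζ t' := by
          intro t'; funext c; simp
        rw [hc, hc, (hζ t).1]
      · rw [hHv]
        have hc : (ζ t ∘ ⇑e₂.symm) ∘ ⇑e₂ = ζ t := by funext c; simp
        rw [hc]
        exact (hζ t).2
    · rintro ⟨ζ', hζ'⟩
      refine ⟨fun t => ζ' t ∘ ⇑e₂, fun t => ⟨?_, ?_⟩⟩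
      · have h1 := (hζ' t).1
        rw [hGv, hFv] at h1
        funext p
        have := congrFun h1 (e₁ p)
        simpa using this
      · have h2 := (hζ' t).2
        rw [hHv] at h2
        exact h2
  · -- rank G'
    have hsurj' : Function.Surjective G'.mulVecLin := by
      intro y
      obtain ⟨u, hu⟩ := hGsurj (y ∘ ⇑e₁)
      refine ⟨u ∘ ⇑e₂.symm, ?_⟩
      rw [Matrix.mulVecLin_apply, hGv]
      rw [Matrix.mulVecLin_apply] at hu
      have hc : (u ∘ ⇑e₂.symm) ∘ ⇑e₂ = u := by funext c; simp
      rw [hc, hu]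
      funext i
      simp
    rw [rank_eq_card_of_surj G' hsurj', Fintype.card_fin]
  · -- rank fromRows
    have hinj' : Function.Injective (Matrix.fromRows G' H').mulVecLin := by
      intro v1 v2 h12
      have hv : ∀ v, (Matrix.fromRows G' H').mulVec v
          = Sum.elim ((G0.mulVec (v ∘ ⇑e₂)) ∘ ⇑e₁.symm) (H0.mulVec (v ∘ ⇑e₂)) := by
        intro v
        rw [Matrix.fromRows_mulVec, hGv, hHv]
      rw [Matrix.mulVecLin_apply, Matrix.mulVecLin_apply, hv, hv] at h12
      have h3 : (Matrix.fromRows G0 H0).mulVec (v1 ∘ ⇑e₂)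
          = (Matrix.fromRows G0 H0).mulVec (v2 ∘ ⇑e₂) := by
        funext c
        rcases c with p | b
        · have := congrFun h12 (Sum.inl (e₁ p))
          simp only [Sum.elim_inl, Function.comp_apply, Equiv.symm_apply_apply] at this
          rw [Matrix.fromRows_mulVec, Matrix.fromRows_mulVec]
          simpa using this
        · have := congrFun h12 (Sum.inr b)
          rw [Matrix.fromRows_mulVec, Matrix.fromRows_mulVec]
          simpa using this
      have h4 : v1 ∘ ⇑e₂ = v2 ∘ ⇑e₂ := hinj (by
        rw [Matrix.mulVecLin_apply, Matrix.mulVecLin_apply]; exact h3)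
      funext c
      have := congrFun h4 (e₂.symm c)
      simpa using this
    rw [rank_eq_card_of_inj _ hinj', Fintype.card_fin]
  · -- right prime
    set σe : (Fin δ ⊕ Fin n) ≃ (TIx (rowDeg (U * P)) ⊕ Fin n) :=
      Equiv.sumCongr e₁.symm (Equiv.refl (Fin n)) with hσe
    have hMat' : Matrix.fromRows
        ((Polynomial.X : Polynomial 𝔽) • G'.map (fun a => (Polynomial.C a : Polynomial 𝔽)) -
          F'.map (fun a => (Polynomial.C a : Polynomial 𝔽)))
        (H'.map (fun a => (Polynomial.C a : Polynomial 𝔽)))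
        = (Matrix.fromRows
            ((Polynomial.X : Polynomial 𝔽) • G0.map Polynomial.C - F0.map Polynomial.C)
            (H0.map Polynomial.C)).submatrix ⇑σe ⇑e₂.symm := by
      ext c j
      rcases c with i | b <;> rfl
    refine ⟨L0.submatrix ⇑e₂.symm ⇑σe, ?_⟩
    rw [hMat', Matrix.submatrix_mul_equiv, hL0, Matrix.submatrix_one_equiv]

/-- Existence of first-order representations of behaviors: a kernel behavior
`B = ker P(σ) ⊆ (𝔽^n)^{ℤ₊}` of McMillan degree `δ` admits a minimal first-order (pencil)
representation `(σG − F)ζ = 0`, `w = Hζ` by constant matrices `G, F, H`. -/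
theorem first_order_representation_behavior
    (𝔽 : Type) [Field 𝔽] [Fintype 𝔽] (r n : ℕ)
    (P : Matrix (Fin r) (Fin n) (Polynomial 𝔽))
    (hP : LinearIndependent (Polynomial 𝔽) P)
    (B : Set (ℕ → Fin n → 𝔽)) (hB : B = { w : ℕ → Fin n → 𝔽 | pSigmaPlus P w = 0 })
    -- the McMillan degree `δ` of `B`, computed from any row-reduced kernel representation
    (U : Matrix (Fin r) (Fin r) (Polynomial 𝔽)) (hU : IsUnit U)
    (hUP : RowReduced (U * P))
    (δ : ℕ) (hδ : δ = ∑ i : Fin r, rowDeg (U * P) i) :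
    ∃ (G F₀ : Matrix (Fin δ) (Fin (δ + (n - r))) 𝔽)
      (H : Matrix (Fin n) (Fin (δ + (n - r))) 𝔽),
      B = { w : ℕ → Fin n → 𝔽 | ∃ ζ : ℕ → Fin (δ + (n - r)) → 𝔽,
        ∀ t : ℕ, G.mulVec (ζ (t + 1)) = F₀.mulVec (ζ t) ∧ w t = H.mulVec (ζ t) } ∧
      G.rank = δ ∧
      (Matrix.fromRows G H).rank = δ + (n - r) ∧
      RightPrime (Matrix.fromRows
        ((Polynomial.X : Polynomial 𝔽) • G.map (fun a => (Polynomial.C a : Polynomial 𝔽)) -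
          F₀.map (fun a => (Polynomial.C a : Polynomial 𝔽)))
        (H.map (fun a => (Polynomial.C a : Polynomial 𝔽)))) := by
  exact first_order_representation_behavior'
    𝔽 r n P hP B hB U hU hUP δ hδ
end
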